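/- arXiv:2012.10177 — 3 statements merged into one kernel-verified Lean document; each statement's English description precedes it below -/
import Mathlib

section
/- For every matrix A with nonnegative integer entries, RSK applied to the transpose A^t yields the pair (Q(A), P(A)), i.e. transposing the matrix swaps the insertion and recording tableaux. -/
namespace RSKPaper

/-- The shape of a tableau: its list of row lengths. -/
def shape (T : List (List ℕ)) : List ℕ := T.map List.length

/-- All entries of the tableau lie in `{1, ..., m}`. -/
def EntriesIn (T : List (List ℕ)) (m : ℕ) : Prop :=
  ∀ row ∈ T, ∀ x ∈ row, 1 ≤ x ∧ x ≤ m

/-- `T` is a semistandard Young tableau: rows are nonempty and weakly increasing,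
row lengths are weakly decreasing, and columns are strictly increasing. -/
def IsSSYT (T : List (List ℕ)) : Prop :=
  (∀ row ∈ T, row ≠ [] ∧ row.Pairwise (· ≤ ·)) ∧
  (∀ i, i + 1 < T.length →
    (T.getD (i+1) []).length ≤ (T.getD i []).length ∧
    ∀ k < (T.getD (i+1) []).length, (T.getD i []).getD k 0 < (T.getD (i+1) []).getD k 0)

/-- Schensted row insertion of `x` into a single row: returns the new row and
the bumped entry, if any. -/
def insRow (x : ℕ) : List ℕ → List ℕ × Option ℕ
  | [] => ([x], none)
  | a :: as =>
      if a ≤ x then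
        let p := insRow x as
        (a :: p.1, p.2)
      else (x :: as, some a)

/-- Schensted insertion of an entry into a tableau. -/
def insertT : List (List ℕ) → ℕ → List (List ℕ)
  | [], x => [[x]]
  | r :: rs, x =>
      match insRow x r with
      | (r', none) => r' :: rs
      | (r', some b) => r' :: insertT rs b

/-- Simultaneous insertion into the insertion tableau `P` and recording of the
label `lbl` at the new box of the recording tableau `Q`. -/
def insPQ : List (List ℕ) → List (List ℕ) → ℕ → ℕ → List (List ℕ) × List (List ℕ)
  | [], _, x, lbl => ([[x]], [[lbl]])
  | r :: rs, qs, x, lbl =>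
      match insRow x r with
      | (r', none) => (r' :: rs, (qs.headD [] ++ [lbl]) :: qs.tail)
      | (r', some b) =>
          let p := insPQ rs qs.tail b lbl
          (r' :: p.1, qs.headD [] :: p.2)

/-- One RSK step: insert the second coordinate, record the first. -/
def RSstep (PQ : List (List ℕ) × List (List ℕ)) (p : ℕ × ℕ) :
    List (List ℕ) × List (List ℕ) :=
  insPQ PQ.1 PQ.2 p.2 p.1

/-- The two-line array of a matrix: the pair `(i, j)` (1-based) appears with
multiplicity `A i j`, listed in lexicographic order. -/
def biword {r n : ℕ} (A : Matrix (Fin r) (Fin n) ℕ) : List (ℕ × ℕ) :=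
  (List.finRange r).flatMap fun i =>
    (List.finRange n).flatMap fun j =>
      List.replicate (A i j) (i.val + 1, j.val + 1)

/-- The Robinson–Schensted–Knuth correspondence: `RSK A = (P A, Q A)`. -/
def RSK {r n : ℕ} (A : Matrix (Fin r) (Fin n) ℕ) :
    List (List ℕ) × List (List ℕ) :=
  (biword A).foldl RSstep ([], [])

/-- The Robinson–Schensted correspondence on permutations: row-insert the word
`w 1, ..., w n`, recording positions. -/
def RS {n : ℕ} (w : Equiv.Perm (Fin n)) : List (List ℕ) × List (List ℕ) :=
  ((List.finRange n).map (fun k => (k.val + 1, (w k).val + 1))).foldl RSstep ([], [])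

/-- The target of RSK: pairs of semistandard tableaux of the same shape, with
entries of the first in `{1,...,n}` and of the second in `{1,...,r}`. -/
def RSKTarget (r n : ℕ) : Set (List (List ℕ) × List (List ℕ)) :=
  {pq | IsSSYT pq.1 ∧ IsSSYT pq.2 ∧ shape pq.1 = shape pq.2 ∧
    EntriesIn pq.1 n ∧ EntriesIn pq.2 r}

/-! Crystal operators via the signature (bracketing) rule. -/

/-- One step of bracket matching: `true` is an unmatched plus pushed on the stack,
`false` is a minus which cancels the most recent unmatched plus if one exists. -/
def sigStep (st : List ℕ × List ℕ) (p : ℕ × Bool) : List ℕ × List ℕ :=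
  if p.2 then (p.1 :: st.1, st.2)
  else
    match st.1 with
    | [] => ([], st.2 ++ [p.1])
    | _ :: ps => (ps, st.2)

/-- Bracket matching: returns (unmatched pluses, newest first; unmatched minuses, oldest first). -/
def matchSig (l : List (ℕ × Bool)) : List ℕ × List ℕ := l.foldl sigStep ([], [])

/-- Position acted upon by the lowering operator `f`. -/
def fIdx (l : List (ℕ × Bool)) : Option ℕ := (matchSig l).1.head?

/-- Position acted upon by the raising operator `e`. -/
def eIdx (l : List (ℕ × Bool)) : Option ℕ := (matchSig l).2.head?

/-- Signature word of a matrix for the `i`-th crystal operator: the columns are the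
tensor factors, column `j` contributing `ε = A (i+1) j` minuses and `φ = A i j` pluses. -/
def matSig {r n : ℕ} (i : ℕ) (hi : i + 1 < r) (A : Matrix (Fin r) (Fin n) ℕ) :
    List (ℕ × Bool) :=
  (List.finRange n).flatMap fun j =>
    List.replicate (A ⟨i+1, hi⟩ j) (j.val, false) ++
      List.replicate (A ⟨i, by omega⟩ j) (j.val, true)

/-- Crystal lowering operator `f_i` on `Mat_{r×n}(ℕ)`: moves one unit from row `i`
to row `i+1` in the selected column (1-based crystal index `i ∈ {1,...,r-1}`,
here 0-based as `i` acting on rows `i, i+1`). -/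
def matF {r n : ℕ} (i : ℕ) (A : Matrix (Fin r) (Fin n) ℕ) :
    Option (Matrix (Fin r) (Fin n) ℕ) :=
  if hi : i + 1 < r then
    (fIdx (matSig i hi A)).map fun jj =>
      Matrix.of fun i' j' =>
        if j'.val = jj then
          if i'.val = i then A i' j' - 1
          else if i'.val = i + 1 then A i' j' + 1
          else A i' j'
        else A i' j'
  else none

/-- Crystal raising operator `e_i` on `Mat_{r×n}(ℕ)`. -/
def matE {r n : ℕ} (i : ℕ) (A : Matrix (Fin r) (Fin n) ℕ) :
    Option (Matrix (Fin r) (Fin n) ℕ) :=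
  if hi : i + 1 < r then
    (eIdx (matSig i hi A)).map fun jj =>
      Matrix.of fun i' j' =>
        if j'.val = jj then
          if i'.val = i then A i' j' + 1
          else if i'.val = i + 1 then A i' j' - 1
          else A i' j'
        else A i' j'
  else none

/-- Cut a word into rows of the given lengths. -/
def reshape : List ℕ → List ℕ → List (List ℕ)
  | [], _ => []
  | l :: ls, w => w.take l :: reshape ls (w.drop l)

/-- Signature word of a tableau for the `i`-th crystal operator (letters `i+1` are
pluses, letters `i+2` are minuses), reading the tableau row by row. -/
def tabSig (i : ℕ) (T : List (List ℕ)) : List (ℕ × Bool) :=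
  (T.flatten.zipIdx.map Prod.swap).filterMap fun p =>
    if p.2 = i + 1 then some (p.1, true)
    else if p.2 = i + 2 then some (p.1, false) else none

/-- Crystal lowering operator `f_i` on semistandard tableaux: changes one entry
`i+1` into `i+2`. -/
def tabF (i : ℕ) (T : List (List ℕ)) : Option (List (List ℕ)) :=
  (fIdx (tabSig i T)).map fun k => reshape (shape T) (T.flatten.set k (i + 2))

/-- Crystal raising operator `e_i` on semistandard tableaux: changes one entry
`i+2` into `i+1`. -/
def tabE (i : ℕ) (T : List (List ℕ)) : Option (List (List ℕ)) :=
  (eIdx (tabSig i T)).map fun k => reshape (shape T) (T.flatten.set k (i + 1))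

/-- Restriction of a tableau: remove all boxes with entry `> m`. -/
def restrict (m : ℕ) (T : List (List ℕ)) : List (List ℕ) :=
  (T.map fun row => row.filter (· ≤ m)).filter (· ≠ [])

end RSKPaper
namespace RSKPaper

/-! ### Auxiliary development for `rsk_transpose` -/

/-- Lexicographic order on pairs. -/
def lexle (p q : ℕ × ℕ) : Prop := p.1 < q.1 ∨ (p.1 = q.1 ∧ p.2 ≤ q.2)

instance : DecidableRel lexle := fun p q => by unfold lexle; infer_instance

lemma lexle_refl (p : ℕ × ℕ) : lexle p p := Or.inr ⟨rfl, le_refl _⟩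

lemma lexle_trans {p q r : ℕ × ℕ} (h1 : lexle p q) (h2 : lexle q r) : lexle p r := by
  rcases h1 with h1 | ⟨h1, h1'⟩ <;> rcases h2 with h2 | ⟨h2, h2'⟩ <;>
    [exact Or.inl (h1.trans h2); exact Or.inl (h2 ▸ h1); exact Or.inl (h1 ▸ h2);
     exact Or.inr ⟨h1.trans h2, h1'.trans h2'⟩]

lemma lexle_antisymm {p q : ℕ × ℕ} (h1 : lexle p q) (h2 : lexle q p) : p = q := by
  rcases h1 with h1 | ⟨h1, h1'⟩ <;> rcases h2 with h2 | ⟨h2, h2'⟩ <;>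
    first
    | omega
    | exact absurd h2 (by omega)
    | exact Prod.ext h1 (le_antisymm h1' h2')

instance : IsAntisymm (ℕ × ℕ) lexle := ⟨fun _ _ => lexle_antisymm⟩
instance : IsTrans (ℕ × ℕ) lexle := ⟨fun _ _ _ => lexle_trans⟩
instance : IsRefl (ℕ × ℕ) lexle := ⟨lexle_refl⟩

/-- top of a pile (newest element's second coordinate). -/
def ptop (P : List (ℕ × ℕ)) : ℕ := (P.headD (0,0)).2

/-- insert a pair into the piles. -/
def pins : List (List (ℕ × ℕ)) → ℕ × ℕ → List (List (ℕ × ℕ)) × Option ℕ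
  | [], p => ([[p]], none)
  | P :: Ps, p =>
      if ptop P ≤ p.2 then
        let r := pins Ps p
        (P :: r.1, r.2)
      else ((p :: P) :: Ps, some (ptop P))

def pinsF (Ps : List (List (ℕ × ℕ))) (p : ℕ × ℕ) : List (List (ℕ × ℕ)) := (pins Ps p).1

def pilesF (w : List (ℕ × ℕ)) : List (List (ℕ × ℕ)) := w.foldl pinsF []

def tops (Ps : List (List (ℕ × ℕ))) : List ℕ := Ps.map ptop

def lasts (Ps : List (List (ℕ × ℕ))) : List ℕ := Ps.map fun P => (P.getLastD (0,0)).1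

/-- bump-collecting step. -/
def bstep (s : List (List (ℕ × ℕ)) × List (ℕ × ℕ)) (p : ℕ × ℕ) :
    List (List (ℕ × ℕ)) × List (ℕ × ℕ) :=
  match h : pins s.1 p with
  | (Ps', none) => (Ps', s.2)
  | (Ps', some t) => (Ps', s.2 ++ [(p.1, t)])

def bumpOf (w : List (ℕ × ℕ)) : List (ℕ × ℕ) := (w.foldl bstep ([], [])).2

/-- the bumped pairs contributed by a pile (stored newest-first). -/
def consec (P : List (ℕ × ℕ)) : List (ℕ × ℕ) := (P.zip P.tail).map fun q => (q.1.1, q.2.2)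

/-- Structural description of `pins`. -/
lemma pins_cases (Ps : List (List (ℕ × ℕ))) (p : ℕ × ℕ) :
    ((pins Ps p).2 = none ∧ (pins Ps p).1 = Ps ++ [[p]] ∧ ∀ P ∈ Ps, ptop P ≤ p.2) ∨
    (∃ A P B, Ps = A ++ P :: B ∧ (∀ Q ∈ A, ptop Q ≤ p.2) ∧ p.2 < ptop P ∧
      (pins Ps p).1 = A ++ (p :: P) :: B ∧ (pins Ps p).2 = some (ptop P)) := by
  induction Ps with
  | nil => left; simp [pins]
  | cons P Ps ih =>
    by_cases h : ptop P ≤ p.2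
    · rcases ih with ⟨h1, h2, h3⟩ | ⟨A, P', B, h1, h2, h3, h4, h5⟩
      · left
        refine ⟨by simp [pins, h, h1], by simp [pins, h, h2], ?_⟩
        intro Q hQ; rcases List.mem_cons.1 hQ with rfl | hQ
        · exact h
        · exact h3 _ hQ
      · right
        refine ⟨P :: A, P', B, by simp [h1], ?_, h3, by simp [pins, h, h4], by simp [pins, h, h5]⟩
        intro Q hQ; rcases List.mem_cons.1 hQ with rfl | hQ
        · exact h
        · exact h2 _ hQ
    · right
      exact ⟨[], P, Ps, rfl, by simp, by omega, by simp [pins, h], by simp [pins, h]⟩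

lemma pins_ne_nil (Ps : List (List (ℕ × ℕ))) (p : ℕ × ℕ) (h : ∀ P ∈ Ps, P ≠ []) :
    ∀ P ∈ (pins Ps p).1, P ≠ [] := by
  induction Ps with
  | nil => simp [pins]
  | cons P Ps ih =>
    by_cases hc : ptop P ≤ p.2
    · simp only [pins, hc, if_pos]
      intro Q hQ; rcases List.mem_cons.1 hQ with rfl | hQ
      · exact h _ (by simp)
      · exact ih (fun R hR => h _ (by simp [hR])) _ hQ
    · simp only [pins, hc, if_neg, not_false_iff]
      intro Q hQ; rcases List.mem_cons.1 hQ with rfl | hQ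
      · simp
      · exact h _ (by simp [hQ])

end RSKPaper
namespace RSKPaper

/-- `insRow` on the tops mirrors `pins`. -/
lemma insRow_tops (Ps : List (List (ℕ × ℕ))) (p : ℕ × ℕ) :
    insRow p.2 (tops Ps) = (tops (pins Ps p).1, (pins Ps p).2) := by
  induction Ps with
  | nil => simp [insRow, pins, tops, ptop]
  | cons P Ps ih =>
    by_cases h : ptop P ≤ p.2
    · show insRow p.2 (ptop P :: tops Ps) = _
      rw [insRow, if_pos h, ih]
      simp [pins, h, tops]
    · show insRow p.2 (ptop P :: tops Ps) = _
      rw [insRow, if_neg h]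
      simp only [pins]
      rw [if_neg h]
      simp [tops, ptop]

lemma bstep_eq_none {s : List (List (ℕ × ℕ)) × List (ℕ × ℕ)} {p : ℕ × ℕ}
    (h : (pins s.1 p).2 = none) : bstep s p = ((pins s.1 p).1, s.2) := by
  unfold bstep
  split <;> rename_i heq <;> rw [heq] at h ⊢ <;> simp_all

lemma bstep_eq_some {s : List (List (ℕ × ℕ)) × List (ℕ × ℕ)} {p : ℕ × ℕ} {t : ℕ}
    (h : (pins s.1 p).2 = some t) : bstep s p = ((pins s.1 p).1, s.2 ++ [(p.1, t)]) := by
  unfold bstep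
  split <;> rename_i heq <;> rw [heq] at h ⊢ <;> simp_all

lemma bstep_cases (s : List (List (ℕ × ℕ)) × List (ℕ × ℕ)) (p : ℕ × ℕ) :
    ((pins s.1 p).2 = none ∧ bstep s p = ((pins s.1 p).1, s.2)) ∨
    ∃ t, (pins s.1 p).2 = some t ∧ bstep s p = ((pins s.1 p).1, s.2 ++ [(p.1, t)]) := by
  rcases ho : (pins s.1 p).2 with _ | t
  · exact Or.inl ⟨rfl, bstep_eq_none ho⟩
  · exact Or.inr ⟨t, rfl, bstep_eq_some ho⟩

lemma foldl_bstep_fst (u : List (ℕ × ℕ)) :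
    ∀ (Ps : List (List (ℕ × ℕ))) acc, (u.foldl bstep (Ps, acc)).1 = u.foldl pinsF Ps := by
  induction u with
  | nil => intro Ps acc; rfl
  | cons p u ih =>
    intro Ps acc
    rw [List.foldl_cons, List.foldl_cons]
    rcases bstep_cases (Ps, acc) p with ⟨_, hb⟩ | ⟨t, _, hb⟩ <;> rw [hb] <;> exact ih _ _

lemma foldl_bstep_acc (u : List (ℕ × ℕ)) :
    ∀ (Ps : List (List (ℕ × ℕ))) acc,
      (u.foldl bstep (Ps, acc)).2 = acc ++ (u.foldl bstep (Ps, [])).2 := by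
  induction u with
  | nil => intro Ps acc; simp
  | cons p u ih =>
    intro Ps acc
    rw [List.foldl_cons, List.foldl_cons]
    rcases bstep_cases (Ps, acc) p with ⟨ho, hb⟩ | ⟨t, ho, hb⟩
    · rw [hb, bstep_eq_none (s := (Ps, ([] : List (ℕ × ℕ)))) ho]
      exact ih _ _
    · rw [hb, bstep_eq_some (s := (Ps, ([] : List (ℕ × ℕ)))) ho]
      rw [ih ((pins Ps p).1) (acc ++ [(p.1, t)]), ih ((pins Ps p).1) ([] ++ [(p.1, t)])]
      simp

/-- In the no-bump case the new pile is appended at the end. -/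
lemma pins_none {Ps : List (List (ℕ × ℕ))} {p : ℕ × ℕ} (h : (pins Ps p).2 = none) :
    (pins Ps p).1 = Ps ++ [[p]] := by
  rcases pins_cases Ps p with ⟨_, h2, _⟩ | ⟨A, P, B, _, _, _, _, h5⟩
  · exact h2
  · rw [h5] at h; exact absurd h (by simp)

lemma lasts_append (Ps Qs : List (List (ℕ × ℕ))) :
    lasts (Ps ++ Qs) = lasts Ps ++ lasts Qs := by simp [lasts]

/-- In the bump case `lasts` is unchanged. -/
lemma lasts_pins_some {Ps : List (List (ℕ × ℕ))} {p : ℕ × ℕ} {t : ℕ}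
    (hne : ∀ P ∈ Ps, P ≠ []) (h : (pins Ps p).2 = some t) :
    lasts (pins Ps p).1 = lasts Ps := by
  rcases pins_cases Ps p with ⟨h1, _, _⟩ | ⟨A, P, B, h1, _, _, h4, _⟩
  · rw [h1] at h; exact absurd h (by simp)
  · rw [h4, h1, lasts_append, lasts_append]
    congr 1
    simp only [lasts, List.map_cons]
    congr 1
    have hP : P ≠ [] := hne P (by simp [h1])
    rcases P with _ | ⟨a, P⟩
    · exact absurd rfl hP
    · simp

/-- Key decomposition: the full RSK fold splits into the first-row (pile) process
and the RSK fold of the bumped word. -/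
lemma foldD (u : List (ℕ × ℕ)) :
    ∀ (Ps : List (List (ℕ × ℕ))) rs qs, (∀ P ∈ Ps, P ≠ []) →
    u.foldl RSstep (tops Ps :: rs, lasts Ps :: qs) =
      (tops (u.foldl pinsF Ps) :: (((u.foldl bstep (Ps, [])).2).foldl RSstep (rs, qs)).1,
       lasts (u.foldl pinsF Ps) :: (((u.foldl bstep (Ps, [])).2).foldl RSstep (rs, qs)).2) := by
  induction u with
  | nil => intro Ps rs qs _; rfl
  | cons p u ih =>
    intro Ps rs qs hne
    rw [List.foldl_cons, List.foldl_cons, List.foldl_cons]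
    have hmir := insRow_tops Ps p
    have hstep : RSstep (tops Ps :: rs, lasts Ps :: qs) p =
        insPQ (tops Ps :: rs) (lasts Ps :: qs) p.2 p.1 := rfl
    rcases ho : (pins Ps p).2 with _ | t
    · -- no bump
      have hPs' : (pins Ps p).1 = Ps ++ [[p]] := pins_none ho
      have h1 : RSstep (tops Ps :: rs, lasts Ps :: qs) p =
          (tops (pinsF Ps p) :: rs, lasts (pinsF Ps p) :: qs) := by
        rw [hstep]
        simp only [insPQ]
        rw [hmir, ho]
        simp [pinsF, hPs', lasts_append, lasts]
      rw [h1]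
      have hb : bstep (Ps, ([] : List (ℕ × ℕ))) p = (pinsF Ps p, []) := by
        unfold bstep; rcases hp : pins Ps p with ⟨Ps', o⟩
        rw [hp] at ho; simp at ho; subst ho; simp [pinsF, hp]
      rw [hb]
      exact ih (pinsF Ps p) rs qs (pins_ne_nil Ps p hne)
    · -- bump
      have h1 : RSstep (tops Ps :: rs, lasts Ps :: qs) p =
          (tops (pinsF Ps p) :: (RSstep (rs, qs) (p.1, t)).1,
           lasts (pinsF Ps p) :: (RSstep (rs, qs) (p.1, t)).2) := by
        rw [hstep]
        simp only [insPQ]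
        rw [hmir, ho]
        simp only [RSstep]
        simp [pinsF, lasts_pins_some hne ho]
      rw [h1]
      have hb : bstep (Ps, ([] : List (ℕ × ℕ))) p = (pinsF Ps p, [(p.1, t)]) := by
        unfold bstep; rcases hp : pins Ps p with ⟨Ps', o⟩
        rw [hp] at ho; simp at ho; subst ho; simp [pinsF, hp]
      rw [hb]
      rw [ih (pinsF Ps p) (RSstep (rs, qs) (p.1, t)).1 (RSstep (rs, qs) (p.1, t)).2
        (pins_ne_nil Ps p hne)]
      rw [foldl_bstep_acc u (pinsF Ps p) [(p.1, t)]]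
      rfl

end RSKPaper
namespace RSKPaper

lemma sorted_getLast?_le {l : List (ℕ × ℕ)} (hs : l.Pairwise lexle) :
    ∀ q ∈ l, ∀ z ∈ l.getLast?, lexle q z := by
  induction l with
  | nil => simp
  | cons a l ih =>
    intro q hq z hz
    rcases List.mem_cons.1 hq with rfl | hq
    · rcases l with _ | ⟨b, l⟩
      · simp at hz; subst hz; exact lexle_refl _
      · rw [List.getLast?_cons_cons] at hz
        have hb : lexle q b := (List.pairwise_cons.1 hs).1 b (by simp)
        exact lexle_trans hb (ih (List.pairwise_cons.1 hs).2 b (by simp) z hz)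
    · rcases l with _ | ⟨b, l⟩
      · simp at hq
      · rw [List.getLast?_cons_cons] at hz
        exact ih (List.pairwise_cons.1 hs).2 q hq z hz

lemma sorted_append_singleton {l : List (ℕ × ℕ)} {x : ℕ × ℕ} (hs : l.Pairwise lexle)
    (h : ∀ z ∈ l.getLast?, lexle z x) : (l ++ [x]).Pairwise lexle := by
  rw [List.pairwise_append]
  refine ⟨hs, List.pairwise_singleton _ _, ?_⟩
  intro a ha y hy
  simp at hy; subst hy
  rcases hl : l.getLast? with _ | z
  · rw [List.getLast?_eq_none_iff] at hl
    subst hl; simp at ha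
  · exact lexle_trans (sorted_getLast?_le hs a ha z hl) (h z hl)

lemma sorted_nat_append_singleton {l : List ℕ} {x : ℕ} (hs : l.Pairwise (· ≤ ·))
    (h : ∀ z ∈ l, z ≤ x) : (l ++ [x]).Pairwise (· ≤ ·) := by
  rw [List.pairwise_append]
  exact ⟨hs, List.pairwise_singleton _ _, fun a ha y hy => by simp at hy; subst hy; exact h a ha⟩

lemma consec_cons {p : ℕ × ℕ} {P : List (ℕ × ℕ)} (h : P ≠ []) :
    consec (p :: P) = (p.1, ptop P) :: consec P := by
  rcases P with _ | ⟨a, P⟩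
  · exact absurd rfl h
  · simp [consec, ptop]

/-- The main invariants: after the first-row process, the bumped word is sorted and
is a permutation of the pile-adjacency pairs. -/
lemma invI (u : List (ℕ × ℕ)) :
    ∀ (Ps : List (List (ℕ × ℕ))) (acc : List (ℕ × ℕ)) (p₀ : ℕ × ℕ),
    (p₀ :: u).Pairwise lexle →
    (∀ P ∈ Ps, P ≠ []) →
    (tops Ps).Pairwise (· ≤ ·) →
    acc.Pairwise lexle →
    acc.Perm (Ps.flatMap consec) →
    (∀ q ∈ acc.getLast?, q.1 ≤ p₀.1 ∧ (q.1 = p₀.1 → ∀ t ∈ tops Ps, p₀.2 < t → q.2 ≤ t)) →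
    (u.foldl bstep (Ps, acc)).2.Pairwise lexle ∧
    (u.foldl bstep (Ps, acc)).2.Perm ((u.foldl pinsF Ps).flatMap consec) := by
  induction u with
  | nil =>
    intro Ps acc p₀ _ _ _ h4 h5 _
    exact ⟨h4, h5⟩
  | cons p u ih =>
    intro Ps acc p₀ hu h1 h2 h4 h5 h6
    have hp₀p : lexle p₀ p := (List.pairwise_cons.1 hu).1 p (by simp)
    have hu' : (p :: u).Pairwise lexle := (List.pairwise_cons.1 hu).2
    rw [List.foldl_cons, List.foldl_cons]
    rcases pins_cases Ps p with ⟨ho, hPs', hle⟩ | ⟨A, P, B, hPs, hA, hPtop, hPs', ho⟩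
    · -- no bump: new pile appended at end
      rw [bstep_eq_none (s := (Ps, acc)) ho]
      have hpinsF : pinsF Ps p = Ps ++ [[p]] := hPs'
      apply ih (pinsF Ps p) acc p hu'
      · exact pins_ne_nil Ps p h1
      · have htt : tops (pinsF Ps p) = tops Ps ++ [p.2] := by rw [hpinsF]; simp [tops, ptop]
        rw [htt]
        exact sorted_nat_append_singleton h2 (fun z hz => by
          rcases List.mem_map.1 hz with ⟨P, hP, rfl⟩; exact hle P hP)
      · exact h4
      · rw [hpinsF, List.flatMap_append]
        simpa [consec] using h5
      · intro q hq
        rcases h6 q hq with ⟨ha, hb⟩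
        constructor
        · rcases hp₀p with h | ⟨h, _⟩ <;> omega
        · intro hqp t ht hpt
          have : t ∈ tops Ps ++ [p.2] := by
            rw [hpinsF] at ht; simpa [tops, ptop] using ht
          rcases List.mem_append.1 this with ht' | ht'
          · have hp₀1 : q.1 = p₀.1 := by rcases hp₀p with h | ⟨h, _⟩ <;> omega
            have hp₀2 : p₀.2 ≤ p.2 := by rcases hp₀p with h | ⟨_, h⟩ <;> omega
            exact hb hp₀1 t ht' (by omega)
          · simp at ht'; omega
    · -- bump from pile P
      rw [bstep_eq_some (s := (Ps, acc)) ho]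
      have hPne : P ≠ [] := h1 P (by rw [hPs]; exact List.mem_append.2 (Or.inr (by simp)))
      have hlast : ∀ z ∈ acc.getLast?, lexle z (p.1, ptop P) := by
        intro z hz
        rcases h6 z hz with ⟨ha, hb⟩
        have ha' : z.1 ≤ p.1 := by rcases hp₀p with h | ⟨h, _⟩ <;> omega
        rcases Nat.lt_or_ge z.1 p.1 with h | h
        · exact Or.inl h
        · have hz1 : z.1 = p.1 := by omega
          have hp₀1 : p₀.1 = p.1 := by rcases hp₀p with hh | ⟨hh, _⟩ <;> omega
          have hp₀2 : p₀.2 ≤ p.2 := by rcases hp₀p with hh | ⟨_, hh⟩ <;> omega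
          have : z.2 ≤ ptop P := by
            apply hb (by omega) (ptop P) _ (by omega)
            rw [hPs]; simp [tops]
          exact Or.inr ⟨hz1, this⟩
      have h2' : (tops A).Pairwise (· ≤ ·) ∧ (tops B).Pairwise (· ≤ ·) ∧
          (∀ a ∈ tops A, a ≤ ptop P ∧ ∀ b ∈ tops B, a ≤ b) ∧ (∀ b ∈ tops B, ptop P ≤ b) := by
        rw [hPs] at h2
        have : tops (A ++ P :: B) = tops A ++ ptop P :: tops B := by simp [tops]
        rw [this, List.pairwise_append] at h2
        obtain ⟨hA1, hA2, hA3⟩ := h2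
        rw [List.pairwise_cons] at hA2
        exact ⟨hA1, hA2.2, fun a ha => ⟨hA3 a ha _ (by simp),
          fun b hb => hA3 a ha b (by simp [hb])⟩, fun b hb => hA2.1 b hb⟩
      apply ih _ _ p hu'
      · show ∀ Q ∈ (pins Ps p).1, Q ≠ []
        exact pins_ne_nil Ps p h1
      · -- new tops sorted
        show (tops (pins Ps p).1).Pairwise (· ≤ ·)
        rw [hPs']
        have : tops (A ++ (p :: P) :: B) = tops A ++ p.2 :: tops B := by simp [tops, ptop]
        rw [this, List.pairwise_append]
        refine ⟨h2'.1, ?_, ?_⟩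
        · rw [List.pairwise_cons]
          exact ⟨fun b hb => le_of_lt (lt_of_lt_of_le hPtop (h2'.2.2.2 b hb)), h2'.2.1⟩
        · intro a ha b hb
          rcases List.mem_cons.1 hb with rfl | hb
          · rcases List.mem_map.1 ha with ⟨Q, hQ, rfl⟩
            exact hA Q hQ
          · exact (h2'.2.2.1 a ha).2 b hb
      · exact sorted_append_singleton h4 hlast
      · -- perm
        show ((Ps, acc).2 ++ [(p.1, ptop P)]).Perm ((pins Ps p).1.flatMap consec)
        rw [hPs']
        simp only [List.flatMap_append, List.flatMap_cons]
        rw [consec_cons hPne]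
        have hthis := h5
        rw [hPs] at hthis
        simp only [List.flatMap_append, List.flatMap_cons] at hthis
        have hx : (acc ++ [(p.1, ptop P)]).Perm ((p.1, ptop P) :: acc) := by
          simpa using List.perm_append_comm (l₁ := acc) (l₂ := [(p.1, ptop P)])
        refine hx.trans ?_
        refine (hthis.cons _).trans ?_
        exact List.perm_middle.symm
      · -- new last-bump invariant
        intro q hq
        rw [show (Ps, acc).2 = acc from rfl, List.getLast?_concat] at hq
        simp at hq
        subst hq
        refine ⟨le_refl _, fun _ t ht hpt => ?_⟩
        rw [hPs'] at ht
        have : t ∈ tops A ++ p.2 :: tops B := by simpa [tops, ptop] using ht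
        rcases List.mem_append.1 this with ht' | ht'
        · rcases List.mem_map.1 ht' with ⟨Q, hQ, rfl⟩
          have := hA Q hQ; omega
        · rcases List.mem_cons.1 ht' with rfl | ht'
          · omega
          · show ptop P ≤ t
            exact h2'.2.2.2 t ht'

end RSKPaper
namespace RSKPaper

/-- greedy selection of the first pile (chronological order), given current top `b`. -/
def recs (b : ℕ) : List (ℕ × ℕ) → List (ℕ × ℕ)
  | [] => []
  | p :: u => if p.2 < b then p :: recs p.2 u else recs b u

/-- the complement of `recs`. -/
def rrest (b : ℕ) : List (ℕ × ℕ) → List (ℕ × ℕ)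
  | [] => []
  | p :: u => if p.2 < b then rrest p.2 u else p :: rrest b u

def chron1 : List (ℕ × ℕ) → List (ℕ × ℕ)
  | [] => []
  | p :: u => p :: recs p.2 u

def restW : List (ℕ × ℕ) → List (ℕ × ℕ)
  | [] => []
  | p :: u => rrest p.2 u

lemma pilesG (u : List (ℕ × ℕ)) :
    ∀ (acc : List (ℕ × ℕ)) (Ps : List (List (ℕ × ℕ))), acc ≠ [] →
    u.foldl pinsF (acc :: Ps) =
      ((recs (ptop acc) u).reverse ++ acc) :: (rrest (ptop acc) u).foldl pinsF Ps := by
  induction u with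
  | nil => intro acc Ps _; simp [recs, rrest]
  | cons p u ih =>
    intro acc Ps hne
    rw [List.foldl_cons]
    by_cases h : p.2 < ptop acc
    · have hstep : pinsF (acc :: Ps) p = (p :: acc) :: Ps := by
        simp [pinsF, pins, h, not_le.2 h]
      rw [hstep, ih (p :: acc) Ps (by simp)]
      have : ptop (p :: acc) = p.2 := rfl
      rw [this]
      show _ = ((recs (ptop acc) (p :: u)).reverse ++ acc) :: _
      have h1 : recs (ptop acc) (p :: u) = p :: recs p.2 u := by simp [recs, h]
      have h2 : rrest (ptop acc) (p :: u) = rrest p.2 u := by simp [rrest, h]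
      rw [h1, h2]
      simp
    · have hstep : pinsF (acc :: Ps) p = acc :: pinsF Ps p := by
        simp [pinsF, pins, not_lt.1 h]
      rw [hstep, ih acc (pinsF Ps p) hne]
      have h1 : recs (ptop acc) (p :: u) = recs (ptop acc) u := by simp [recs, h]
      have h2 : rrest (ptop acc) (p :: u) = p :: rrest (ptop acc) u := by simp [rrest, h]
      rw [h1, h2, List.foldl_cons]

lemma pilesF_cons (p : ℕ × ℕ) (u : List (ℕ × ℕ)) :
    pilesF (p :: u) = (chron1 (p :: u)).reverse :: pilesF (restW (p :: u)) := by
  show u.foldl pinsF (pinsF [] p) = _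
  have : pinsF [] p = [p] :: [] := rfl
  rw [this, pilesG u [p] [] (by simp)]
  simp [chron1, restW, ptop, pilesF]

lemma recs_lt (b : ℕ) (u : List (ℕ × ℕ)) : ∀ x ∈ recs b u, x.2 < b := by
  induction u generalizing b with
  | nil => simp [recs]
  | cons q u ih =>
    intro x hx
    by_cases h : q.2 < b
    · rw [recs, if_pos h] at hx
      rcases List.mem_cons.1 hx with rfl | hx
      · exact h
      · exact lt_trans (ih q.2 x hx) h
    · rw [recs, if_neg h] at hx
      exact ih b x hx

lemma recs_pairwise (b : ℕ) (u : List (ℕ × ℕ)) :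
    (recs b u).Pairwise (fun x y => y.2 < x.2) := by
  induction u generalizing b with
  | nil => simp [recs]
  | cons q u ih =>
    by_cases h : q.2 < b
    · rw [recs, if_pos h]
      exact List.pairwise_cons.2 ⟨fun y hy => recs_lt q.2 u y hy, ih q.2⟩
    · rw [recs, if_neg h]; exact ih b

lemma recs_sublist (b : ℕ) (u : List (ℕ × ℕ)) : (recs b u).Sublist u := by
  induction u generalizing b with
  | nil => simp [recs]
  | cons q u ih =>
    by_cases h : q.2 < b
    · rw [recs, if_pos h]; exact (ih q.2).cons₂ q
    · rw [recs, if_neg h]; exact (ih b).cons q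

lemma rrest_sublist (b : ℕ) (u : List (ℕ × ℕ)) : (rrest b u).Sublist u := by
  induction u generalizing b with
  | nil => simp [rrest]
  | cons q u ih =>
    by_cases h : q.2 < b
    · rw [rrest, if_pos h]; exact (ih q.2).cons q
    · rw [rrest, if_neg h]; exact (ih b).cons₂ q

lemma recs_rrest_perm (b : ℕ) (u : List (ℕ × ℕ)) :
    (recs b u ++ rrest b u).Perm u := by
  induction u generalizing b with
  | nil => simp [recs, rrest]
  | cons q u ih =>
    by_cases h : q.2 < b
    · rw [recs, if_pos h, rrest, if_pos h]
      exact (List.cons_append (a := q)) ▸ ((ih q.2).cons q)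
    · rw [recs, if_neg h, rrest, if_neg h]
      exact List.perm_middle.trans ((ih b).cons q)

/-- Characterization of `recs` for sorted input: exactly the (new) strict minima. -/
lemma recs_mem {u : List (ℕ × ℕ)} (hs : u.Pairwise lexle) (b : ℕ) (x : ℕ × ℕ) :
    x ∈ recs b u ↔ x ∈ u ∧ x.2 < b ∧ ∀ y ∈ u, y.1 ≤ x.1 → y.2 ≤ x.2 → y = x := by
  induction u generalizing b with
  | nil => simp [recs]
  | cons q u ih =>
    have hq' : ∀ y ∈ u, lexle q y := (List.pairwise_cons.1 hs).1
    have hs' : u.Pairwise lexle := (List.pairwise_cons.1 hs).2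
    by_cases h : q.2 < b
    · rw [recs, if_pos h]
      constructor
      · intro hx
        rcases List.mem_cons.1 hx with rfl | hx
        · refine ⟨by simp, h, ?_⟩
          intro y hy h1 h2
          rcases List.mem_cons.1 hy with rfl | hy
          · rfl
          · rcases hq' y hy with hh | ⟨hh1, hh2⟩
            · omega
            · exact Prod.ext hh1.symm (le_antisymm h2 hh2)
        · obtain ⟨hx1, hx2, hx3⟩ := (ih hs' q.2).1 hx
          refine ⟨by simp [hx1], by omega, ?_⟩
          intro y hy h1 h2
          rcases List.mem_cons.1 hy with rfl | hy
          · omega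
          · exact hx3 y hy h1 h2
      · rintro ⟨hx1, hx2, hx3⟩
        by_cases hxq : x = q
        · subst hxq; simp
        · have hx1' : x ∈ u := by
            rcases List.mem_cons.1 hx1 with rfl | h'
            · exact absurd rfl hxq
            · exact h'
          right
          apply (ih hs' q.2).2
          refine ⟨hx1', ?_, fun y hy h1 h2 => hx3 y (by simp [hy]) h1 h2⟩
          by_contra hcon
          have hq2 : q.2 ≤ x.2 := by omega
          have hq1 : q.1 ≤ x.1 := by
            rcases hq' x hx1' with hh | ⟨hh, _⟩ <;> omega
          exact hxq ((hx3 q (by simp) hq1 hq2).symm)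
    · rw [recs, if_neg h]
      constructor
      · intro hx
        obtain ⟨hx1, hx2, hx3⟩ := (ih hs' b).1 hx
        refine ⟨by simp [hx1], hx2, ?_⟩
        intro y hy h1 h2
        rcases List.mem_cons.1 hy with rfl | hy
        · omega
        · exact hx3 y hy h1 h2
      · rintro ⟨hx1, hx2, hx3⟩
        rcases List.mem_cons.1 hx1 with rfl | hx1
        · exact absurd hx2 h
        · exact (ih hs' b).2 ⟨hx1, hx2, fun y hy h1 h2 => hx3 y (by simp [hy]) h1 h2⟩

end RSKPaper
namespace RSKPaper

/-- minimality of an occurrence in a word. -/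
def MinIn (w : List (ℕ × ℕ)) (x : ℕ × ℕ) : Prop :=
  ∀ y ∈ w, y.1 ≤ x.1 → y.2 ≤ x.2 → y = x

lemma chron1_mem {w : List (ℕ × ℕ)} (hs : w.Pairwise lexle) (x : ℕ × ℕ) :
    x ∈ chron1 w ↔ x ∈ w ∧ MinIn w x := by
  rcases w with _ | ⟨p, u⟩
  · simp [chron1, MinIn]
  · have hq' : ∀ y ∈ u, lexle p y := (List.pairwise_cons.1 hs).1
    have hs' : u.Pairwise lexle := (List.pairwise_cons.1 hs).2
    rw [chron1]
    constructor
    · intro hx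
      rcases List.mem_cons.1 hx with rfl | hx
      · refine ⟨by simp, ?_⟩
        intro y hy h1 h2
        rcases List.mem_cons.1 hy with rfl | hy
        · rfl
        · rcases hq' y hy with hh | ⟨hh1, hh2⟩
          · omega
          · exact Prod.ext hh1.symm (le_antisymm h2 hh2)
      · obtain ⟨hx1, hx2, hx3⟩ := (recs_mem hs' p.2 x).1 hx
        refine ⟨by simp [hx1], ?_⟩
        intro y hy h1 h2
        rcases List.mem_cons.1 hy with rfl | hy
        · omega
        · exact hx3 y hy h1 h2
    · rintro ⟨hx1, hx2⟩
      by_cases hxq : x = p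
      · subst hxq; simp
      · have hx1' : x ∈ u := by
          rcases List.mem_cons.1 hx1 with rfl | h'
          · exact absurd rfl hxq
          · exact h'
        right
        apply (recs_mem hs' p.2 x).2
        have hp1 : p.1 ≤ x.1 := by rcases hq' x hx1' with hh | ⟨hh, _⟩ <;> omega
        have hx2' : x.2 < p.2 := by
          by_contra hcon
          exact hxq ((hx2 p (by simp) hp1 (by omega)).symm)
        exact ⟨hx1', hx2', fun y hy h1 h2 => hx2 y (by simp [hy]) h1 h2⟩

lemma chron1_sublist (w : List (ℕ × ℕ)) : (chron1 w).Sublist w := by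
  rcases w with _ | ⟨p, u⟩
  · simp [chron1]
  · exact (recs_sublist p.2 u).cons₂ p

lemma chron1_pairwise {w : List (ℕ × ℕ)} (hs : w.Pairwise lexle) :
    (chron1 w).Pairwise (fun x y => x.1 < y.1 ∧ y.2 < x.2) := by
  have hdesc : (chron1 w).Pairwise (fun x y => y.2 < x.2) := by
    rcases w with _ | ⟨p, u⟩
    · simp [chron1]
    · rw [chron1]
      exact List.pairwise_cons.2 ⟨fun y hy => recs_lt p.2 u y hy, recs_pairwise p.2 u⟩
  have hlex : (chron1 w).Pairwise lexle := hs.sublist (chron1_sublist w)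
  refine (hlex.and hdesc).imp ?_
  rintro a b ⟨hab, hba⟩
  rcases hab with h | ⟨h, h2⟩
  · exact ⟨h, hba⟩
  · omega

lemma chron1_nodup {w : List (ℕ × ℕ)} (hs : w.Pairwise lexle) : (chron1 w).Nodup :=
  (chron1_pairwise hs).imp (fun h => by rintro rfl; omega)

lemma chron1_split (w : List (ℕ × ℕ)) : (chron1 w ++ restW w).Perm w := by
  rcases w with _ | ⟨p, u⟩
  · simp [chron1, restW]
  · rw [chron1, restW, List.cons_append]
    exact ((recs_rrest_perm p.2 u).cons p)

/-- The key symmetry: the first pile of the transposed word is the reversed, swapped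
first pile. -/
lemma chron1_swap {w v : List (ℕ × ℕ)} (hsw : w.Pairwise lexle) (hsv : v.Pairwise lexle)
    (hperm : v.Perm (w.map Prod.swap)) :
    chron1 v = ((chron1 w).map Prod.swap).reverse := by
  have hmem : ∀ x, x ∈ chron1 v ↔ x ∈ ((chron1 w).map Prod.swap).reverse := by
    intro x
    rw [List.mem_reverse, List.mem_map]
    rw [chron1_mem hsv]
    constructor
    · rintro ⟨hx1, hx2⟩
      refine ⟨Prod.swap x, ?_, Prod.swap_swap x⟩
      rw [chron1_mem hsw]
      have hxw : Prod.swap x ∈ w := by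
        have := hperm.mem_iff.1 hx1
        rcases List.mem_map.1 this with ⟨z, hz, hzx⟩
        rwa [show z = Prod.swap x from by rw [← hzx, Prod.swap_swap]] at hz
      refine ⟨hxw, ?_⟩
      intro y hy h1 h2
      have hyv : Prod.swap y ∈ v := hperm.mem_iff.2 (List.mem_map.2 ⟨y, hy, rfl⟩)
      have := hx2 (Prod.swap y) hyv (by simpa using h2) (by simpa using h1)
      rw [← this, Prod.swap_swap]
    · rintro ⟨z, hz, rfl⟩
      rw [chron1_mem hsw] at hz
      obtain ⟨hz1, hz2⟩ := hz
      refine ⟨hperm.mem_iff.2 (List.mem_map.2 ⟨z, hz1, rfl⟩), ?_⟩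
      intro y hy h1 h2
      have hyw : Prod.swap y ∈ w := by
        have := hperm.mem_iff.1 hy
        rcases List.mem_map.1 this with ⟨z', hz', hzx⟩
        rwa [show z' = Prod.swap y from by rw [← hzx, Prod.swap_swap]] at hz'
      have := hz2 (Prod.swap y) hyw (by simpa using h2) (by simpa using h1)
      rw [show y = Prod.swap (Prod.swap y) from (Prod.swap_swap y).symm, this]
  have hnodup2 : (((chron1 w).map Prod.swap).reverse).Nodup := by
    rw [List.nodup_reverse]
    exact (chron1_nodup hsw).map (fun a b => by
      intro h; rw [← Prod.swap_swap a, h, Prod.swap_swap])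
  have hperm' : (chron1 v).Perm (((chron1 w).map Prod.swap).reverse) :=
    (List.perm_ext_iff_of_nodup (chron1_nodup hsv) hnodup2).2 hmem
  have hsorted2 : (((chron1 w).map Prod.swap).reverse).Pairwise lexle := by
    rw [List.pairwise_reverse, List.pairwise_map]
    exact (chron1_pairwise hsw).imp (fun h => Or.inl h.2)
  exact List.Perm.eq_of_pairwise' (hsv.sublist (chron1_sublist v)) hsorted2 hperm'

lemma restW_sorted {w : List (ℕ × ℕ)} (hs : w.Pairwise lexle) : (restW w).Pairwise lexle := by
  rcases w with _ | ⟨p, u⟩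
  · simp [restW]
  · exact ((List.pairwise_cons.1 hs).2).sublist (rrest_sublist p.2 u)

lemma restW_perm {w v : List (ℕ × ℕ)} (hsw : w.Pairwise lexle) (hsv : v.Pairwise lexle)
    (hperm : v.Perm (w.map Prod.swap)) :
    (restW v).Perm ((restW w).map Prod.swap) := by
  have h1 : (chron1 v ++ restW v).Perm ((chron1 w).map Prod.swap ++ (restW w).map Prod.swap) := by
    rw [← List.map_append]
    exact (chron1_split v).trans (hperm.trans ((chron1_split w).symm.map _))
  have h2 : (chron1 v).Perm ((chron1 w).map Prod.swap) := by
    rw [chron1_swap hsw hsv hperm]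
    exact List.reverse_perm _
  have h3 : ((chron1 w).map Prod.swap ++ restW v).Perm
      ((chron1 w).map Prod.swap ++ (restW w).map Prod.swap) :=
    ((h2.symm.append_right (restW v)).trans h1)
  exact (List.perm_append_left_iff _).1 h3

lemma restW_length_lt {w : List (ℕ × ℕ)} (h : w ≠ []) : (restW w).length < w.length := by
  rcases w with _ | ⟨p, u⟩
  · exact absurd rfl h
  · exact Nat.lt_succ_of_le ((rrest_sublist p.2 u).length_le)

/-- Pile symmetry under transposition. -/
lemma pilesS : ∀ (N : ℕ) (w v : List (ℕ × ℕ)), w.length ≤ N →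
    w.Pairwise lexle → v.Pairwise lexle → v.Perm (w.map Prod.swap) →
    pilesF v = (pilesF w).map (fun P => (P.map Prod.swap).reverse) := by
  intro N
  induction N with
  | zero =>
    intro w v hlen _ _ hperm
    rw [List.length_eq_zero_iff.1 (Nat.le_zero.1 hlen)] at hperm ⊢
    rw [(by simpa using hperm : v = [])]
    rfl
  | succ N ih =>
    intro w v hlen hsw hsv hperm
    rcases hw : w with _ | ⟨p, u⟩
    · subst hw
      rw [(by simpa using hperm : v = [])]
      rfl
    · subst hw
      rcases hv : v with _ | ⟨p', u'⟩
      · exact absurd (hperm.symm.length_eq) (by simp [hv])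
      · rw [← hv]
        rw [pilesF_cons p u, show v = p' :: u' from hv, pilesF_cons p' u', ← hv]
        rw [List.map_cons]
        congr 1
        · rw [chron1_swap hsw hsv hperm]
          simp [List.map_reverse]
        · apply ih
          · have := restW_length_lt (w := p :: u) (by simp)
            simp only [List.length_cons] at this hlen
            omega
          · exact restW_sorted hsw
          · exact restW_sorted hsv
          · exact restW_perm hsw hsv hperm

end RSKPaper
namespace RSKPaper

lemma pilesF_ne_nil (w : List (ℕ × ℕ)) : ∀ P ∈ pilesF w, P ≠ [] := by
  suffices h : ∀ (w' : List (ℕ × ℕ)) (Ps : List (List (ℕ × ℕ))), (∀ P ∈ Ps, P ≠ []) →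
      ∀ P ∈ w'.foldl pinsF Ps, P ≠ [] by
    exact h w [] (by simp)
  intro w'
  induction w' with
  | nil => intro Ps h; exact h
  | cons p u ih => intro Ps h; exact ih (pinsF Ps p) (pins_ne_nil Ps p h)

lemma flatten_pins (Ps : List (List (ℕ × ℕ))) (p : ℕ × ℕ) :
    ((pins Ps p).1.flatten).Perm (p :: Ps.flatten) := by
  rcases pins_cases Ps p with ⟨_, h2, _⟩ | ⟨A, P, B, h1, _, _, h4, _⟩
  · rw [h2, List.flatten_append]
    simpa using List.perm_append_comm (l₁ := Ps.flatten) (l₂ := [p])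
  · rw [h4, h1, List.flatten_append, List.flatten_append, List.flatten_cons,
      List.flatten_cons, List.cons_append]
    exact List.perm_middle

lemma flatten_pilesF (w : List (ℕ × ℕ)) :
    ∀ Ps, ((w.foldl pinsF Ps).flatten).Perm (w ++ Ps.flatten) := by
  induction w with
  | nil => intro Ps; simp
  | cons p u ih =>
    intro Ps
    rw [List.foldl_cons, List.cons_append]
    refine (ih (pinsF Ps p)).trans ?_
    refine ((flatten_pins Ps p).append_left u).trans ?_
    exact List.perm_middle

lemma consec_length (P : List (ℕ × ℕ)) : (consec P).length = P.length - 1 := by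
  rw [consec, List.length_map, List.length_zip, List.length_tail]
  omega

lemma flat_consec_length : ∀ (Ps : List (List (ℕ × ℕ))), (∀ P ∈ Ps, P ≠ []) →
    (Ps.flatMap consec).length + Ps.length = Ps.flatten.length := by
  intro Ps
  induction Ps with
  | nil => simp
  | cons P Ps ih =>
    intro h
    rw [List.flatMap_cons, List.flatten_cons, List.length_append, List.length_append,
      List.length_cons, consec_length]
    have h1 : P.length ≥ 1 := List.length_pos_iff.2 (h P (by simp))
    have h2 := ih (fun Q hQ => h Q (by simp [hQ]))
    omega

lemma bump_inv {w : List (ℕ × ℕ)} (hs : w.Pairwise lexle) :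
    (bumpOf w).Pairwise lexle ∧ (bumpOf w).Perm ((pilesF w).flatMap consec) := by
  rcases w with _ | ⟨p, u⟩
  · exact ⟨by simp [bumpOf], by simp [bumpOf, pilesF]⟩
  · have h2 : bumpOf (p :: u) = (u.foldl bstep ([[p]], [])).2 := by
      rw [bumpOf, List.foldl_cons,
        bstep_eq_none (s := (([], []) : List (List (ℕ × ℕ)) × List (ℕ × ℕ))) (by rfl)]
      rfl
    have h1 : pilesF (p :: u) = u.foldl pinsF [[p]] := by
      rw [pilesF, List.foldl_cons]; rfl
    rw [h1, h2]
    exact invI u [[p]] [] p hs (by simp) (by simp [tops]) (by simp)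
      (by simp [consec]) (by simp)

lemma bump_length_lt {w : List (ℕ × ℕ)} (hs : w.Pairwise lexle) (h : w ≠ []) :
    (bumpOf w).length < w.length := by
  have hperm := (bump_inv hs).2
  have hflat := flatten_pilesF w []
  have hne := pilesF_ne_nil w
  have hlen := flat_consec_length (pilesF w) hne
  have hlenflat : (pilesF w).flatten.length = w.length := by
    simpa [pilesF] using hflat.length_eq
  have hpos : 1 ≤ (pilesF w).length := by
    rcases w with _ | ⟨p, u⟩
    · exact absurd rfl h
    · rw [pilesF_cons]; simp
  rw [hperm.length_eq]
  omega

lemma getLastD_ne_nil {l : List (ℕ × ℕ)} (h : l ≠ []) (d₁ d₂ : ℕ × ℕ) :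
    l.getLastD d₁ = l.getLastD d₂ := by
  rcases List.eq_nil_or_concat' l with rfl | ⟨L, b, rfl⟩
  · exact absurd rfl h
  · simp [List.getLastD_concat]

lemma consec_cons₂ (x y : ℕ × ℕ) (l : List (ℕ × ℕ)) :
    consec (x :: y :: l) = (x.1, y.2) :: consec (y :: l) := rfl

lemma consec_snoc : ∀ (m : List (ℕ × ℕ)) (a : ℕ × ℕ), m ≠ [] →
    consec (m ++ [a]) = consec m ++ [((m.getLastD (0,0)).1, a.2)] := by
  intro m
  induction m with
  | nil => intro a h; exact absurd rfl h
  | cons x m ih =>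
    intro a _
    rcases m with _ | ⟨y, t⟩
    · simp [consec]
    · show consec (x :: y :: (t ++ [a])) =
        consec (x :: y :: t) ++ [(((x :: y :: t).getLastD (0,0)).1, a.2)]
      have e2 : (x :: y :: t).getLastD (0,0) = (y :: t).getLastD (0,0) := by
        rw [List.getLastD_cons]
        exact getLastD_ne_nil (by simp) _ _
      rw [e2, consec_cons₂, consec_cons₂,
        show y :: (t ++ [a]) = (y :: t) ++ [a] from rfl, ih a (by simp)]
      simp

lemma consec_rev_swap : ∀ (P : List (ℕ × ℕ)),
    consec ((P.map Prod.swap).reverse) = ((consec P).map Prod.swap).reverse := by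
  intro P
  induction P with
  | nil => simp [consec]
  | cons p P ih =>
    rcases P with _ | ⟨h, t⟩
    · simp [consec]
    · have hm : ((h :: t).map Prod.swap).reverse ≠ [] := by
        intro hh; rw [List.reverse_eq_nil_iff] at hh; simp at hh
      have hgl : (((h :: t).map Prod.swap).reverse).getLastD (0,0) = Prod.swap h := by
        rw [List.getLastD_eq_getLast?, List.getLast?_reverse]
        simp
      calc consec (((p :: h :: t).map Prod.swap).reverse)
          = consec ((((h :: t).map Prod.swap).reverse) ++ [Prod.swap p]) := by
            rw [List.map_cons, List.reverse_cons]
        _ = consec (((h :: t).map Prod.swap).reverse) ++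
              [(((((h :: t).map Prod.swap).reverse).getLastD (0,0)).1, (Prod.swap p).2)] :=
            consec_snoc _ _ hm
        _ = ((consec (h :: t)).map Prod.swap).reverse ++ [(h.2, p.1)] := by
            rw [ih, hgl]
            rfl
        _ = ((consec (p :: h :: t)).map Prod.swap).reverse := by
            rw [consec_cons₂]
            simp

lemma perm_flatMap_congr {f g : List (ℕ × ℕ) → List (ℕ × ℕ)} :
    ∀ (l : List (List (ℕ × ℕ))), (∀ a ∈ l, (f a).Perm (g a)) →
    (l.flatMap f).Perm (l.flatMap g) := by
  intro l
  induction l with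
  | nil => simp
  | cons a l ih =>
    intro h
    rw [List.flatMap_cons, List.flatMap_cons]
    exact (h a (by simp)).append (ih (fun b hb => h b (by simp [hb])))

lemma ptop_rev_swap {P : List (ℕ × ℕ)} (h : P ≠ []) :
    ptop ((P.map Prod.swap).reverse) = (P.getLastD (0,0)).1 := by
  rcases List.eq_nil_or_concat' P with rfl | ⟨L, b, rfl⟩
  · exact absurd rfl h
  · rw [List.map_append, List.reverse_append, List.getLastD_concat]
    simp [ptop]

lemma getLastD_rev_swap {P : List (ℕ × ℕ)} (h : P ≠ []) :
    (((P.map Prod.swap).reverse).getLastD (0,0)).1 = ptop P := by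
  rcases P with _ | ⟨a, t⟩
  · exact absurd rfl h
  · rw [List.map_cons, List.reverse_cons, List.getLastD_concat]
    simp [ptop]

lemma RSKfold_eq (p : ℕ × ℕ) (u : List (ℕ × ℕ)) :
    (p :: u).foldl RSstep ([], []) =
      (tops (pilesF (p :: u)) :: ((bumpOf (p :: u)).foldl RSstep ([], [])).1,
       lasts (pilesF (p :: u)) :: ((bumpOf (p :: u)).foldl RSstep ([], [])).2) := by
  rw [List.foldl_cons]
  have h0 : RSstep ([], []) p = (tops [[p]] :: ([] : List (List ℕ)),
      lasts [[p]] :: ([] : List (List ℕ))) := rfl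
  rw [h0, foldD u [[p]] [] [] (by simp)]
  have h1 : pilesF (p :: u) = u.foldl pinsF [[p]] := by
    rw [pilesF, List.foldl_cons]; rfl
  have h2 : bumpOf (p :: u) = (u.foldl bstep ([[p]], [])).2 := by
    rw [bumpOf, List.foldl_cons,
      bstep_eq_none (s := (([], []) : List (List (ℕ × ℕ)) × List (ℕ × ℕ))) (by rfl)]
    rfl
  rw [h1, h2]

/-- Main symmetry lemma for sorted two-line arrays. -/
lemma mainR : ∀ (N : ℕ) (w v : List (ℕ × ℕ)), w.length ≤ N →
    w.Pairwise lexle → v.Pairwise lexle → v.Perm (w.map Prod.swap) →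
    v.foldl RSstep ([], []) = ((w.foldl RSstep ([], [])).2, (w.foldl RSstep ([], [])).1) := by
  intro N
  induction N with
  | zero =>
    intro w v hlen _ _ hperm
    rw [List.length_eq_zero_iff.1 (Nat.le_zero.1 hlen)] at hperm ⊢
    rw [(by simpa using hperm : v = [])]
    rfl
  | succ N ih =>
    intro w v hlen hsw hsv hperm
    rcases hw : w with _ | ⟨p, u⟩
    · subst hw
      rw [(by simpa using hperm : v = [])]
      rfl
    · subst hw
      rcases hv : v with _ | ⟨p', u'⟩
      · exact absurd (hperm.symm.length_eq) (by simp [hv])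
      · rw [← hv]
        have hbw := bump_inv hsw
        have hbv := bump_inv hsv
        have hPs := pilesS (N + 1) (p :: u) v hlen hsw hsv hperm
        have hPne := pilesF_ne_nil (p :: u)
        have htops : tops (pilesF v) = lasts (pilesF (p :: u)) := by
          rw [hPs, tops, lasts, List.map_map]
          apply List.map_congr_left
          intro P hP
          exact ptop_rev_swap (hPne P hP)
        have hlasts : lasts (pilesF v) = tops (pilesF (p :: u)) := by
          rw [hPs, tops, lasts, List.map_map]
          apply List.map_congr_left
          intro P hP
          exact getLastD_rev_swap (hPne P hP)
        have hbperm : (bumpOf v).Perm ((bumpOf (p :: u)).map Prod.swap) := by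
          refine hbv.2.trans ?_
          rw [hPs, List.flatMap_map]
          refine (perm_flatMap_congr (g := fun P => (consec P).map Prod.swap) _
            (fun P _ => ?_)).trans ?_
          · show (consec ((P.map Prod.swap).reverse)).Perm ((consec P).map Prod.swap)
            rw [consec_rev_swap]
            exact List.reverse_perm _
          · rw [← List.map_flatMap]
            exact (hbw.2.map Prod.swap).symm
        have hlt : (bumpOf (p :: u)).length < (p :: u).length :=
          bump_length_lt hsw (by simp)
        have hIH := ih (bumpOf (p :: u)) (bumpOf v)
          (by simp only [List.length_cons] at hlen hlt ⊢; omega)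
          hbw.1 hbv.1 hbperm
        rw [show v = p' :: u' from hv, RSKfold_eq p' u', ← hv, RSKfold_eq p u,
          hIH, htops, hlasts]

end RSKPaper
namespace RSKPaper

lemma biword_sorted {r n : ℕ} (A : Matrix (Fin r) (Fin n) ℕ) :
    (biword A).Pairwise lexle := by
  rw [biword, List.pairwise_flatMap]
  constructor
  · intro i _
    rw [List.pairwise_flatMap]
    constructor
    · intro j _
      rw [List.pairwise_replicate]
      exact Or.inr (lexle_refl _)
    · refine (List.pairwise_lt_finRange n).imp ?_
      intro j₁ j₂ h x hx y hy
      rw [List.eq_of_mem_replicate hx, List.eq_of_mem_replicate hy]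
      exact Or.inr ⟨rfl, by omega⟩
  · refine (List.pairwise_lt_finRange r).imp ?_
    intro i₁ i₂ h x hx y hy
    rcases List.mem_flatMap.1 hx with ⟨j₁, _, hx'⟩
    rcases List.mem_flatMap.1 hy with ⟨j₂, _, hy'⟩
    rw [List.eq_of_mem_replicate hx', List.eq_of_mem_replicate hy']
    exact Or.inl (by simp; omega)

section PermHelpers
variable {α β γ : Type*}

lemma flatMap_append_perm (l : List α) (p q : α → List γ) :
    (l.flatMap fun a => p a ++ q a).Perm (l.flatMap p ++ l.flatMap q) := by
  induction l with
  | nil => simp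
  | cons a l ih =>
    rw [List.flatMap_cons, List.flatMap_cons, List.flatMap_cons]
    have h1 : ((p a ++ q a) ++ (l.flatMap fun a => p a ++ q a)).Perm
        ((p a ++ q a) ++ (l.flatMap p ++ l.flatMap q)) := ih.append_left _
    have h2 : ((p a ++ q a) ++ (l.flatMap p ++ l.flatMap q)).Perm
        ((p a ++ l.flatMap p) ++ (q a ++ l.flatMap q)) := by
      rw [List.append_assoc (p a) (q a), List.append_assoc (p a) (l.flatMap p)]
      refine List.Perm.append_left _ ?_
      rw [← List.append_assoc, ← List.append_assoc]
      exact List.perm_append_comm.append_right _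
    exact h1.trans h2

lemma flatMap_comm_perm (l₁ : List α) (l₂ : List β) (g : α → β → List γ) :
    (l₁.flatMap fun a => l₂.flatMap (g a)).Perm
      (l₂.flatMap fun b => l₁.flatMap fun a => g a b) := by
  induction l₁ with
  | nil => simp
  | cons a l₁ ih =>
    rw [List.flatMap_cons]
    refine (ih.append_left _).trans ?_
    exact (flatMap_append_perm l₂ (g a) (fun b => l₁.flatMap fun a' => g a' b)).symm

end PermHelpers

lemma biword_transpose_perm {r n : ℕ} (A : Matrix (Fin r) (Fin n) ℕ) :
    (biword A.transpose).Perm ((biword A).map Prod.swap) := by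
  have hmap : (biword A).map Prod.swap =
      (List.finRange r).flatMap fun i => (List.finRange n).flatMap fun j =>
        List.replicate (A i j) (j.val + 1, i.val + 1) := by
    rw [biword, List.map_flatMap]
    congr 1
    funext i
    rw [List.map_flatMap]
    congr 1
    funext j
    rw [List.map_replicate]
    rfl
  rw [hmap, biword]
  have : ∀ (j : Fin n) (i : Fin r), A.transpose j i = A i j := fun j i => rfl
  simp only [this]
  exact (flatMap_comm_perm (List.finRange r) (List.finRange n)
    (fun i j => List.replicate (A i j) (j.val + 1, i.val + 1))).symm

end RSKPaper

namespace RSKPaper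

/-- For every matrix `A` with nonnegative integer entries,
`RSK Aᵀ = (Q A, P A)`: transposing the matrix swaps the insertion and recording tableaux. -/
theorem rsk_transpose (r n : ℕ) (A : Matrix (Fin r) (Fin n) ℕ) :
    RSK A.transpose = ((RSK A).2, (RSK A).1) :=
  mainR (biword A).length (biword A) (biword A.transpose) le_rfl
    (biword_sorted A) (biword_sorted A.transpose) (biword_transpose_perm A)

end RSKPaper
end

section
/- For permutations w of {1,...,n}, if P(w) denotes the insertion tableau of the Robinson-Schensted correspondence, then P(w^{-1}) = Q(w), where Q(w) is the recording tableau. -/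
namespace RSKPaper

/-! ### Auxiliary definitions -/

def incr : List ℕ → ℕ → List ℕ
  | [], _ => [1]
  | a :: l, 0 => (a + 1) :: l
  | a :: l, d + 1 => a :: incr l d

def place : List (List ℕ) → ℕ → ℕ → List (List ℕ)
  | [], _, v => [[v]]
  | r :: rs, 0, v => (r ++ [v]) :: rs
  | r :: rs, d + 1, v => r :: place rs d v

def diffIdx : List ℕ → List ℕ → ℕ
  | a :: as, b :: bs => if a = b then diffIdx as bs + 1 else 0
  | _, _ => 0

def sup : List ℕ → List ℕ → List ℕ
  | [], b => b
  | a :: as, [] => a :: as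
  | a :: as, b :: bs => max a b :: sup as bs

def insDepth : List (List ℕ) → ℕ → ℕ
  | [], _ => 0
  | r :: rs, x =>
      match insRow x r with
      | (_, none) => 0
      | (_, some b) => insDepth rs b + 1

def RowLe (r s : List ℕ) : Prop :=
  s.length ≤ r.length ∧ ∀ k < s.length, r.getD k 0 < s.getD k 0

def StdT (T : List (List ℕ)) : Prop :=
  (∀ row ∈ T, row ≠ [] ∧ row.Pairwise (· < ·)) ∧ T.IsChain RowLe

/-! ### Basic lemmas on `incr`, `sup`, `diffIdx`, `place`, `shape` -/

@[simp] lemma shape_nil : shape [] = [] := rfl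
@[simp] lemma shape_cons (r : List ℕ) (T : List (List ℕ)) :
    shape (r :: T) = r.length :: shape T := rfl
@[simp] lemma shape_length (T : List (List ℕ)) : (shape T).length = T.length :=
  List.length_map _

lemma shape_place (Q : List (List ℕ)) (d v : ℕ) :
    shape (place Q d v) = incr (shape Q) d := by
  induction Q generalizing d with
  | nil => simp [place, incr, shape]
  | cons r rs ih =>
    cases d with
    | zero => simp [place, incr, shape]
    | succ d => simpa [place, incr, shape] using ih d

lemma incr_length {l : List ℕ} {d : ℕ} (h : d ≤ l.length) :
    (incr l d).length = max l.length (d + 1) := by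
  induction l generalizing d with
  | nil => simp at h; simp [h, incr]
  | cons a l ih =>
    cases d with
    | zero => simp [incr]
    | succ d =>
      simp at h
      rw [incr]
      simp only [List.length_cons, ih h]
      omega

lemma incr_ne {l : List ℕ} {d : ℕ} (h : d ≤ l.length) : incr l d ≠ l := by
  induction l generalizing d with
  | nil => simp [incr]
  | cons a l ih =>
    cases d with
    | zero => simp [incr]
    | succ d =>
      simp at h
      rw [incr]
      simp only [ne_eq, List.cons.injEq, not_and]
      exact fun _ => ih h

lemma incr_inj {l : List ℕ} {d₁ d₂ : ℕ} (h₁ : d₁ ≤ l.length) (h₂ : d₂ ≤ l.length)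
    (h : incr l d₁ = incr l d₂) : d₁ = d₂ := by
  induction l generalizing d₁ d₂ with
  | nil => simp at h₁ h₂; omega
  | cons a l ih =>
    cases d₁ with
    | zero =>
      cases d₂ with
      | zero => rfl
      | succ d₂ =>
        rw [incr, incr] at h
        simp at h
        try omega
    | succ d₁ =>
      cases d₂ with
      | zero => rw [incr, incr] at h; simp at h; try omega
      | succ d₂ =>
        rw [incr, incr] at h
        simp at h h₁ h₂
        rw [ih h₁ h₂ h]

lemma incr_comm {l : List ℕ} {d₁ d₂ : ℕ} (h₁ : d₁ ≤ l.length) (h₂ : d₂ ≤ l.length) :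
    incr (incr l d₁) d₂ = incr (incr l d₂) d₁ := by
  induction l generalizing d₁ d₂ with
  | nil =>
    simp at h₁ h₂; subst h₁; subst h₂; rfl
  | cons a l ih =>
    cases d₁ with
    | zero =>
      cases d₂ with
      | zero => rfl
      | succ d₂ => simp [incr]
    | succ d₁ =>
      cases d₂ with
      | zero => simp [incr]
      | succ d₂ =>
        simp at h₁ h₂
        simp [incr, ih h₁ h₂]

lemma sup_self (l : List ℕ) : sup l l = l := by
  induction l with
  | nil => rfl
  | cons a l ih => simp [sup, ih]

lemma sup_comm (l₁ l₂ : List ℕ) : sup l₁ l₂ = sup l₂ l₁ := by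
  induction l₁ generalizing l₂ with
  | nil => cases l₂ <;> rfl
  | cons a as ih =>
    cases l₂ with
    | nil => rfl
    | cons b bs => simp [sup, ih, Nat.max_comm]

lemma sup_incr_self {l : List ℕ} {d : ℕ} (h : d ≤ l.length) :
    sup l (incr l d) = incr l d := by
  induction l generalizing d with
  | nil => simp at h; subst h; rfl
  | cons a l ih =>
    cases d with
    | zero => simp [incr, sup, sup_self]
    | succ d => simp at h; simp [incr, sup, ih h]

lemma sup_incr_incr {l : List ℕ} {d₁ d₂ : ℕ} (hne : d₁ ≠ d₂)
    (h₁ : d₁ ≤ l.length) (h₂ : d₂ ≤ l.length) :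
    sup (incr l d₁) (incr l d₂) = incr (incr l d₁) d₂ := by
  induction l generalizing d₁ d₂ with
  | nil => simp at h₁ h₂; omega
  | cons a l ih =>
    cases d₁ with
    | zero =>
      cases d₂ with
      | zero => omega
      | succ d₂ =>
        simp at h₂
        simp [incr, sup, sup_incr_self h₂]
    | succ d₁ =>
      cases d₂ with
      | zero =>
        simp at h₁
        rw [sup_comm]
        simp [incr, sup, sup_incr_self h₁]
      | succ d₂ =>
        simp at h₁ h₂
        simp [incr, sup, ih (by omega) h₁ h₂]

lemma diffIdx_incr {l : List ℕ} {d : ℕ} (h : d ≤ l.length) :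
    diffIdx l (incr l d) = d := by
  induction l generalizing d with
  | nil => simp at h; subst h; rfl
  | cons a l ih =>
    cases d with
    | zero => simp [incr, diffIdx]
    | succ d => simp at h; simp [incr, diffIdx, ih h]

end RSKPaper
namespace RSKPaper

/-! ### Row insertion lemmas -/

def bumpPos (x : ℕ) (r : List ℕ) : ℕ := (r.takeWhile (· ≤ x)).length

lemma getD_eq_getElem' (l : List ℕ) {k : ℕ} (h : k < l.length) :
    l.getD k 0 = l[k] := List.getD_eq_getElem l 0 h

lemma getD_mem' (l : List ℕ) {k : ℕ} (h : k < l.length) : l.getD k 0 ∈ l := by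
  rw [getD_eq_getElem' l h]; exact List.getElem_mem h

lemma getD_append_left {l₁ l₂ : List ℕ} {k : ℕ} (h : k < l₁.length) :
    (l₁ ++ l₂).getD k 0 = l₁.getD k 0 := by
  rw [getD_eq_getElem' _ (by simp; omega), getD_eq_getElem' _ h,
    List.getElem_append_left h]

lemma getD_snoc_self (l : List ℕ) (a : ℕ) : (l ++ [a]).getD l.length 0 = a := by
  rw [getD_eq_getElem' _ (by simp)]
  exact List.getElem_concat_length (l := l) (a := a) rfl (by simp)

lemma getD_set' {l : List ℕ} {i k a : ℕ} (h : k < l.length) :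
    (l.set i a).getD k 0 = if i = k then a else l.getD k 0 := by
  rw [getD_eq_getElem' _ (by simpa using h), List.getElem_set]
  split
  · rfl
  · rw [getD_eq_getElem' _ h]

lemma sorted_getD_lt {r : List ℕ} (hs : r.Pairwise (· < ·)) {k₁ k₂ : ℕ}
    (h1 : k₁ < k₂) (h2 : k₂ < r.length) : r.getD k₁ 0 < r.getD k₂ 0 := by
  rw [getD_eq_getElem' _ (by omega), getD_eq_getElem' _ h2]
  exact List.pairwise_iff_getElem.mp hs k₁ k₂ (by omega) h2 h1

lemma insRow_eq (x : ℕ) (r : List ℕ) :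
    (bumpPos x r < r.length ∧
       insRow x r = (r.set (bumpPos x r) x, some (r.getD (bumpPos x r) 0)) ∧
       x < r.getD (bumpPos x r) 0 ∧ (∀ k < bumpPos x r, r.getD k 0 ≤ x)) ∨
    (bumpPos x r = r.length ∧ insRow x r = (r ++ [x], none) ∧ ∀ a ∈ r, a ≤ x) := by
  induction r with
  | nil => right; simp [bumpPos, insRow]
  | cons a as ih =>
    by_cases hax : a ≤ x
    · have hb : bumpPos x (a :: as) = bumpPos x as + 1 := by
        simp [bumpPos, List.takeWhile_cons, hax]
      rcases ih with ⟨h1, h2, h3, h4⟩ | ⟨h1, h2, h3⟩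
      · left
        refine ⟨by simp [hb]; omega, ?_, ?_, ?_⟩
        · simp [insRow, hax, h2, hb]
        · simpa [hb] using h3
        · intro k hk
          rw [hb] at hk
          cases k with
          | zero => simpa using hax
          | succ k => simpa using h4 k (by omega)
      · right
        refine ⟨by simp [hb, h1], ?_, ?_⟩
        · simp [insRow, hax, h2, hb]
        · intro b hb'
          rcases List.mem_cons.mp hb' with h | h
          · omega
          · exact h3 b h
    · left
      have hb : bumpPos x (a :: as) = 0 := by
        simp [bumpPos, List.takeWhile_cons, hax]
      refine ⟨by simp [hb], ?_, by simpa [hb] using hax, by simp [hb]⟩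
      simp [insRow, hax, hb]

lemma insRow_none {x : ℕ} {r : List ℕ} {r' : List ℕ} (h : insRow x r = (r', none)) :
    r' = r ++ [x] ∧ ∀ a ∈ r, a ≤ x := by
  rcases insRow_eq x r with ⟨_, h2, _, _⟩ | ⟨_, h2, h3⟩
  · rw [h] at h2; simp at h2
  · rw [h] at h2
    injection h2 with e1 _
    exact ⟨e1, h3⟩

lemma insRow_some {x : ℕ} {r r' : List ℕ} {b : ℕ} (h : insRow x r = (r', some b)) :
    bumpPos x r < r.length ∧ r' = r.set (bumpPos x r) x ∧ b = r.getD (bumpPos x r) 0 ∧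
      x < b ∧ (∀ k < bumpPos x r, r.getD k 0 ≤ x) := by
  rcases insRow_eq x r with ⟨h1, h2, h3, h4⟩ | ⟨_, h2, _⟩
  · rw [h] at h2
    injection h2 with e1 e2
    injection e2 with e2
    exact ⟨h1, e1, e2, by rw [e2]; exact h3, h4⟩
  · rw [h] at h2; simp at h2

lemma insRow_none_of_all {x : ℕ} {r : List ℕ} (h : ∀ a ∈ r, a ≤ x) :
    insRow x r = (r ++ [x], none) := by
  rcases insRow_eq x r with ⟨h1, _, h3, _⟩ | ⟨_, h2, _⟩
  · exact absurd (h _ (getD_mem' r h1)) (by omega)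
  · exact h2

lemma sorted_set {r : List ℕ} {p x : ℕ} (hs : r.Pairwise (· < ·)) (hp : p < r.length)
    (hlt : ∀ k < p, r.getD k 0 < x) (hgt : x < r.getD p 0) :
    (r.set p x).Pairwise (· < ·) := by
  rw [List.pairwise_iff_getElem] at hs ⊢
  intro i j hi hj hij
  simp only [List.length_set] at hi hj
  rw [List.getElem_set, List.getElem_set]
  split <;> split
  · omega
  · -- i = p < j : x < r[j]
    have : r.getD p 0 < r.getD j 0 := sorted_getD_lt (List.pairwise_iff_getElem.mpr hs) (by omega) hj
    rw [getD_eq_getElem' _ hj] at this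
    omega
  · -- j = p, i < p : r[i] < x
    have := hlt i (by omega)
    rw [getD_eq_getElem' _ hi] at this
    omega
  · exact hs i j hi hj hij

lemma set_perm {l : List ℕ} {p : ℕ} (x : ℕ) (h : p < l.length) :
    (l.set p x ++ [l.getD p 0]).Perm (x :: l) := by
  induction l generalizing p with
  | nil => simp at h
  | cons a as ih =>
    cases p with
    | zero =>
      simp only [List.set_cons_zero, List.getD_cons_zero, List.cons_append]
      calc (x :: (as ++ [a])).Perm (x :: (a :: as)) := by
            exact List.Perm.cons x (List.perm_append_singleton a as)
    | succ p =>
      simp only [List.set_cons_succ, List.getD_cons_succ, List.cons_append]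
      have := (ih (p := p) (by simpa using h)).cons a
      exact this.trans (List.Perm.swap x a as)

end RSKPaper
namespace RSKPaper

/-! ### Tableau insertion lemmas -/

lemma insertT_cons (r : List ℕ) (rs : List (List ℕ)) (x : ℕ) :
    insertT (r :: rs) x = (insRow x r).1 ::
      (match (insRow x r).2 with | none => rs | some b => insertT rs b) := by
  show (match insRow x r with
        | (r', none) => r' :: rs
        | (r', some b) => r' :: insertT rs b) = _
  rcases h : insRow x r with ⟨r', o⟩
  cases o <;> rfl

lemma insDepth_cons (r : List ℕ) (rs : List (List ℕ)) (x : ℕ) :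
    insDepth (r :: rs) x =
      (match (insRow x r).2 with | none => 0 | some b => insDepth rs b + 1) := by
  show (match insRow x r with
        | (_, none) => 0
        | (_, some b) => insDepth rs b + 1) = _
  rcases h : insRow x r with ⟨r', o⟩
  cases o <;> rfl

lemma insDepth_le (T : List (List ℕ)) (x : ℕ) : insDepth T x ≤ T.length := by
  induction T generalizing x with
  | nil => simp [insDepth]
  | cons r rs ih =>
    rw [insDepth_cons]
    rcases h : insRow x r with ⟨r', o⟩
    cases o with
    | none => simp [h]
    | some b =>
      show insDepth rs b + 1 ≤ rs.length + 1
      exact Nat.succ_le_succ (ih b)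

lemma shape_insertT (T : List (List ℕ)) (x : ℕ) :
    shape (insertT T x) = incr (shape T) (insDepth T x) := by
  induction T generalizing x with
  | nil => simp [insertT, insDepth, incr]
  | cons r rs ih =>
    rcases h : insRow x r with ⟨r', o⟩
    cases o with
    | none =>
      obtain ⟨h1, _⟩ := insRow_none h
      have hred : insertT (r :: rs) x = (r ++ [x]) :: rs := by
        rw [insertT_cons, h, h1]
      have hd : insDepth (r :: rs) x = 0 := by rw [insDepth_cons, h]
      rw [hred, hd]
      simp [incr, shape]
    | some b =>
      obtain ⟨_, h1, _, _, _⟩ := insRow_some h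
      have hred : insertT (r :: rs) x = r.set (bumpPos x r) x :: insertT rs b := by
        rw [insertT_cons, h, h1]
      have hd : insDepth (r :: rs) x = insDepth rs b + 1 := by rw [insDepth_cons, h]
      rw [hred, hd]
      simp only [shape_cons, List.length_set, ih]
      rw [incr]

lemma flatten_insertT (T : List (List ℕ)) (x : ℕ) :
    (insertT T x).flatten.Perm (x :: T.flatten) := by
  induction T generalizing x with
  | nil => simp [insertT]
  | cons r rs ih =>
    rcases h : insRow x r with ⟨r', o⟩
    cases o with
    | none =>
      obtain ⟨h1, _⟩ := insRow_none h
      have hred : insertT (r :: rs) x = (r ++ [x]) :: rs := by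
        rw [insertT_cons, h, h1]
      rw [hred]
      simp only [List.flatten_cons, List.append_assoc, List.singleton_append]
      exact List.perm_middle
    | some b =>
      obtain ⟨hp, h1, hb, _, _⟩ := insRow_some h
      have hred : insertT (r :: rs) x = r.set (bumpPos x r) x :: insertT rs b := by
        rw [insertT_cons, h, h1]
      rw [hred]
      simp only [List.flatten_cons]
      have p1 := (ih b).append_left (r.set (bumpPos x r) x)
      have e1 : r.set (bumpPos x r) x ++ (b :: rs.flatten)
          = (r.set (bumpPos x r) x ++ [b]) ++ rs.flatten := by simp
      rw [e1] at p1
      have p2 : ((r.set (bumpPos x r) x ++ [b]) ++ rs.flatten).Perm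
          ((x :: r) ++ rs.flatten) :=
        List.Perm.append_right _ (hb ▸ set_perm x hp)
      simpa using p1.trans p2

lemma StdT_tail {r : List ℕ} {rs : List (List ℕ)} (h : StdT (r :: rs)) : StdT rs :=
  ⟨fun row hr => h.1 row (List.mem_cons_of_mem _ hr), h.2.tail⟩

lemma insertT_std (T : List (List ℕ)) (x : ℕ) (h : StdT T)
    (hnd : (x :: T.flatten).Nodup) : StdT (insertT T x) := by
  induction T generalizing x with
  | nil =>
    constructor
    · intro row hr
      simp [insertT] at hr
      subst hr
      simp
    · simp [insertT]
  | cons r rs ih =>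
    simp only [List.flatten_cons, List.nodup_cons, List.mem_append] at hnd
    obtain ⟨hxm, hnd'⟩ := hnd
    have hxr : x ∉ r := fun hc => hxm (Or.inl hc)
    obtain ⟨hrne, hrsort⟩ := h.1 r List.mem_cons_self
    have hchain := h.2
    rcases hI : insRow x r with ⟨r', o⟩
    cases o with
    | none =>
      obtain ⟨h1, hall⟩ := insRow_none hI
      have hred : insertT (r :: rs) x = (r ++ [x]) :: rs := by
        rw [insertT_cons, hI, h1]
      rw [hred]
      constructor
      · intro row hr
        rcases List.mem_cons.mp hr with hh | hh
        · subst hh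
          constructor
          · simp
          · rw [List.pairwise_append]
            refine ⟨hrsort, by simp, ?_⟩
            intro a ha b hb
            simp at hb
            subst hb
            exact lt_of_le_of_ne (hall a ha) (fun hc => hxr (hc ▸ ha))
        · exact h.1 row (List.mem_cons_of_mem _ hh)
      · cases rs with
        | nil => simp
        | cons r₁ rs' =>
          rw [List.isChain_cons_cons] at hchain ⊢
          refine ⟨⟨?_, ?_⟩, hchain.2⟩
          · simp
            have := hchain.1.1
            omega
          · intro k hk
            rw [getD_append_left (by have := hchain.1.1; omega)]
            exact hchain.1.2 k hk
    | some b =>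
      obtain ⟨hp, h1, hbv, hxb, hle⟩ := insRow_some hI
      have hred : insertT (r :: rs) x = r.set (bumpPos x r) x :: insertT rs b := by
        rw [insertT_cons, hI, h1]
      rw [hred]
      set p := bumpPos x r with hpdef
      have hbmem : b ∈ r := hbv ▸ getD_mem' r hp
      have hndr : (r ++ rs.flatten).Nodup := hnd'
      have hbfl : b ∉ rs.flatten := by
        have := List.disjoint_of_nodup_append hndr
        exact fun hc => (this hbmem) hc
      have hIH : StdT (insertT rs b) :=
        ih b (StdT_tail h) (List.nodup_cons.mpr ⟨hbfl, hndr.of_append_right⟩)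
      have hltp : ∀ k < p, r.getD k 0 < x := by
        intro k hk
        exact lt_of_le_of_ne (hle k hk) (fun hc => hxr (hc ▸ getD_mem' r (by omega)))
      have hrsort' : (r.set p x).Pairwise (· < ·) :=
        sorted_set hrsort hp hltp (hbv ▸ hxb)
      constructor
      · intro row hr
        rcases List.mem_cons.mp hr with hh | hh
        · subst hh
          refine ⟨?_, hrsort'⟩
          have : (r.set p x).length = r.length := by simp
          intro hc
          rw [hc] at this
          simp at this
          exact hrne (List.length_eq_zero_iff.mp this.symm)
        · exact hIH.1 row hh
      · rw [List.isChain_cons]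
        refine ⟨?_, hIH.2⟩
        intro u hu
        -- u is the head of insertT rs b
        cases rs with
        | nil =>
          simp [insertT] at hu
          subst hu
          constructor
          · simpa using Nat.one_le_iff_ne_zero.mpr
              (fun hc => hrne (List.length_eq_zero_iff.mp (by simpa using hc)))
          · intro k hk
            simp at hk
            subst hk
            simp only [List.getD_cons_zero]
            rw [getD_set' (by omega)]
            split
            · omega
            · rcases Nat.eq_zero_or_pos p with h0 | h0
              · omega
              · have := sorted_getD_lt hrsort h0 hp
                omega
        | cons r₁ rs' =>
          rw [insertT_cons] at hu
          simp only [List.head?_cons, Option.mem_some_iff] at hu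
          rw [List.isChain_cons_cons] at hchain
          obtain ⟨⟨hlen1, hcol1⟩, _⟩ := hchain
          rcases hI₁ : insRow b r₁ with ⟨u', o₁⟩
          cases o₁ with
          | none =>
            obtain ⟨hu1, hall₁⟩ := insRow_none hI₁
            rw [hI₁] at hu
            replace hu : u' = u := hu
            subst hu
            rw [hu1]
            -- p ≥ r₁.length
            have hppos : r₁.length ≤ p := by
              by_contra hc
              push_neg at hc
              have hcol := hcol1 p hc
              have : r₁.getD p 0 ≤ b := hall₁ _ (getD_mem' r₁ hc)
              omega
            have hlenstrict : r₁.length < r.length := by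
              rcases Nat.lt_or_ge r₁.length r.length with h' | h'
              · exact h'
              · omega
            constructor
            · simp; omega
            · intro k hk
              simp only [List.length_append, List.length_cons, List.length_nil] at hk
              rcases Nat.lt_or_ge k r₁.length with hk1 | hk1
              · rw [getD_append_left hk1, getD_set' (by omega)]
                have hne : p ≠ k := by omega
                rw [if_neg hne]
                exact hcol1 k hk1
              · have hkk : k = r₁.length := by omega
                rw [hkk, getD_snoc_self, getD_set' (by omega)]
                by_cases hpe : p = r₁.length
                · rw [if_pos hpe]; omega
                · rw [if_neg hpe]
                  have h2 := sorted_getD_lt hrsort (show r₁.length < p by omega) hp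
                  omega
          | some c =>
            obtain ⟨hq, hu1, _, hbc, hleq⟩ := insRow_some hI₁
            rw [hI₁] at hu
            replace hu : u' = u := hu
            subst hu
            rw [hu1]
            set q := bumpPos b r₁ with hqdef
            have hqp : q ≤ p := by
              by_contra hc
              push_neg at hc
              have h1 : r₁.getD p 0 ≤ b := hleq p hc
              have h2 : r.getD p 0 < r₁.getD p 0 := hcol1 p (by omega)
              omega
            constructor
            · simp; omega
            · intro k hk
              simp only [List.length_set] at hk
              rw [getD_set' hk, getD_set' (by omega)]
              by_cases hkq : q = k
              · subst hkq
                rw [if_pos rfl, hbv]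
                rcases Nat.lt_or_ge q p with h' | h'
                · have hne : p ≠ q := by omega
                  rw [if_neg hne]
                  exact sorted_getD_lt hrsort h' hp
                · split
                  · omega
                  · next hne => exact sorted_getD_lt hrsort (by omega) hp
              · simp only [if_neg hkq]
                by_cases hkp : p = k
                · subst hkp
                  have hxx : (if p = p then x else r.getD p 0) = x := if_pos rfl
                  rw [hxx]
                  have := hcol1 p hk
                  omega
                · simp only [if_neg hkp]
                  exact hcol1 k hk

end RSKPaper
namespace RSKPaper

/-! ### Restriction lemmas -/

@[simp] lemma restrict_nil (m : ℕ) : restrict m [] = [] := rfl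

lemma restrict_cons_pos {m : ℕ} {r : List ℕ} (T : List (List ℕ))
    (h : r.filter (· ≤ m) ≠ []) :
    restrict m (r :: T) = r.filter (· ≤ m) :: restrict m T := by
  simp [restrict, List.filter_cons, h]

lemma restrict_cons_neg {m : ℕ} {r : List ℕ} (T : List (List ℕ))
    (h : r.filter (· ≤ m) = []) :
    restrict m (r :: T) = restrict m T := by
  simp [restrict, List.filter_cons, h]

lemma sorted_head_le {r : List ℕ} (hs : r.Pairwise (· < ·)) {y : ℕ} (hy : y ∈ r) :
    r.getD 0 0 ≤ y := by
  obtain ⟨i, hi, rfl⟩ := List.getElem_of_mem hy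
  rw [getD_eq_getElem' _ (by omega)]
  rcases Nat.eq_zero_or_pos i with h0 | h0
  · subst h0; exact le_refl _
  · exact le_of_lt (List.pairwise_iff_getElem.mp hs 0 i (by omega) hi h0)

lemma colBound {r : List ℕ} {rs : List (List ℕ)} (h : StdT (r :: rs)) :
    ∀ s ∈ rs, ∀ y ∈ s, r.getD 0 0 < y := by
  induction rs generalizing r with
  | nil => simp
  | cons r₁ rs' ih =>
    intro s hs y hy
    have hchain := h.2
    rw [List.isChain_cons_cons] at hchain
    obtain ⟨⟨hlen, hcol⟩, _⟩ := hchain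
    obtain ⟨h1ne, h1sort⟩ := h.1 r₁ (by simp)
    have hlen1 : 0 < r₁.length := List.length_pos_iff.mpr h1ne
    have hc0 : r.getD 0 0 < r₁.getD 0 0 := hcol 0 hlen1
    rcases List.mem_cons.mp hs with hh | hh
    · subst hh
      exact lt_of_lt_of_le hc0 (sorted_head_le h1sort hy)
    · exact lt_trans hc0 (ih (StdT_tail h) s hh y hy)

lemma flatten_mem {T : List (List ℕ)} {y : ℕ} (h : y ∈ T.flatten) :
    ∃ s ∈ T, y ∈ s := List.mem_flatten.mp h

lemma restrict_eq_nil_of_gt {m : ℕ} {T : List (List ℕ)}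
    (h : ∀ y ∈ T.flatten, m < y) : restrict m T = [] := by
  induction T with
  | nil => rfl
  | cons r rs ih =>
    rw [restrict_cons_neg]
    · exact ih (fun y hy => h y (by simp [hy]))
    · rw [List.filter_eq_nil_iff]
      intro a ha
      have := h a (by simp [ha])
      simp only [decide_eq_true_eq]
      omega

lemma flatten_restrict (m : ℕ) (T : List (List ℕ)) :
    (restrict m T).flatten = T.flatten.filter (· ≤ m) := by
  induction T with
  | nil => rfl
  | cons r rs ih =>
    by_cases hf : r.filter (· ≤ m) = []
    · rw [restrict_cons_neg _ hf]
      simp [List.filter_append, hf, ih]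
    · rw [restrict_cons_pos _ hf]
      simp [List.filter_append, ih]

lemma restrict_restrict {m m' : ℕ} (h : m ≤ m') (T : List (List ℕ)) :
    restrict m (restrict m' T) = restrict m T := by
  induction T with
  | nil => rfl
  | cons r rs ih =>
    have hff : (r.filter (· ≤ m')).filter (· ≤ m) = r.filter (· ≤ m) := by
      rw [List.filter_filter]
      apply List.filter_congr
      intro a _
      by_cases ham : a ≤ m
      · simp [ham, show a ≤ m' by omega]
      · simp [ham]
    by_cases hf : r.filter (· ≤ m') = []
    · rw [restrict_cons_neg _ hf, ih, restrict_cons_neg]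
      rw [← hff, hf]; rfl
    · rw [restrict_cons_pos _ hf]
      by_cases hf2 : r.filter (· ≤ m) = []
      · rw [restrict_cons_neg, ih, restrict_cons_neg _ hf2]
        rw [hff]; exact hf2
      · rw [restrict_cons_pos, ih, restrict_cons_pos _ hf2, hff]
        rw [hff]; exact hf2

lemma restrict_eq_self {m : ℕ} {T : List (List ℕ)} (h : StdT T)
    (hb : ∀ y ∈ T.flatten, y ≤ m) : restrict m T = T := by
  induction T with
  | nil => rfl
  | cons r rs ih =>
    have hfr : r.filter (· ≤ m) = r :=
      List.filter_eq_self.mpr (fun a ha => by simpa using hb a (by simp [ha]))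
    rw [restrict_cons_pos _ (by rw [hfr]; exact (h.1 r (by simp)).1), hfr,
      ih (StdT_tail h) (fun y hy => hb y (by simp [hy]))]

lemma getD_prefix {l₁ l₂ : List ℕ} (h : l₁ <+: l₂) {k : ℕ} (hk : k < l₁.length) :
    l₂.getD k 0 = l₁.getD k 0 := by
  obtain ⟨t, rfl⟩ := h
  exact getD_append_left hk

lemma sorted_filter_eq_takeWhile {r : List ℕ} (hs : r.Pairwise (· < ·)) (m : ℕ) :
    r.filter (· ≤ m) = r.takeWhile (· ≤ m) := by
  induction r with
  | nil => rfl
  | cons a as ih =>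
    rw [List.pairwise_cons] at hs
    by_cases ham : a ≤ m
    · simp [List.filter_cons, List.takeWhile_cons, ham, ih hs.2]
    · have h1 : List.filter (fun x => decide (x ≤ m)) (a :: as) = [] := by
        rw [List.filter_eq_nil_iff]
        intro y hy
        simp only [decide_eq_true_eq]
        rcases List.mem_cons.mp hy with rfl | hy'
        · omega
        · have := hs.1 y hy'; omega
      rw [show List.filter (· ≤ m) (a :: as) = List.filter (fun x => decide (x ≤ m)) (a :: as) from rfl,
        h1, List.takeWhile_cons_of_neg (by simpa using ham)]

lemma tw_lt_length {r : List ℕ} {m k : ℕ} (hk : k < r.length)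
    (h : ∀ k' ≤ k, r.getD k' 0 ≤ m) : k < (r.takeWhile (· ≤ m)).length := by
  induction r generalizing k with
  | nil => simp at hk
  | cons a as ih =>
    have h0 : a ≤ m := by simpa using h 0 (Nat.zero_le _)
    rw [List.takeWhile_cons_of_pos (by simpa using h0)]
    cases k with
    | zero => simp
    | succ k =>
      simp only [List.length_cons]
      apply Nat.succ_lt_succ
      apply ih (by simpa using hk)
      intro k' hk'
      simpa using h (k' + 1) (by omega)

lemma tw_getD_le {r : List ℕ} {m k : ℕ} (hk : k < (r.takeWhile (· ≤ m)).length) :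
    r.getD k 0 ≤ m := by
  have hpre := List.takeWhile_prefix (l := r) (p := (· ≤ m))
  rw [getD_prefix hpre hk]
  have := List.mem_takeWhile_imp (getD_mem' _ hk)
  simpa using this

lemma StdT_restrict {T : List (List ℕ)} (m : ℕ) (h : StdT T) :
    StdT (restrict m T) := by
  induction T with
  | nil => exact ⟨by simp, by simp⟩
  | cons r rs ih =>
    have hrs := StdT_tail h
    obtain ⟨hrne, hrsort⟩ := h.1 r (by simp)
    by_cases hf : r.filter (· ≤ m) = []
    · rw [restrict_cons_neg _ hf]
      exact ih hrs
    · rw [restrict_cons_pos _ hf]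
      constructor
      · intro row hrow
        rcases List.mem_cons.mp hrow with hh | hh
        · subst hh
          exact ⟨hf, hrsort.filter _⟩
        · exact (ih hrs).1 row hh
      · rw [List.isChain_cons]
        refine ⟨?_, (ih hrs).2⟩
        intro u hu
        cases rs with
        | nil => simp at hu
        | cons r₁ rs' =>
          obtain ⟨h1ne, h1sort⟩ := h.1 r₁ (by simp)
          have hchain := h.2
          rw [List.isChain_cons_cons] at hchain
          obtain ⟨⟨hlen1, hcol1⟩, _⟩ := hchain
          by_cases hf₁ : r₁.filter (· ≤ m) = []
          · have hnil : restrict m (r₁ :: rs') = [] := by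
              apply restrict_eq_nil_of_gt
              intro y hy
              rcases flatten_mem hy with ⟨s, hs, hys⟩
              rcases List.mem_cons.mp hs with hh | hh
              · subst hh
                have := List.filter_eq_nil_iff.mp hf₁ y hys
                simp only [decide_eq_true_eq] at this
                omega
              · have hy1 : m < r₁.getD 0 0 := by
                  have h01 : r₁.getD 0 0 ∈ r₁ := getD_mem' r₁ (List.length_pos_iff.mpr h1ne)
                  have := List.filter_eq_nil_iff.mp hf₁ _ h01
                  simp only [decide_eq_true_eq] at this
                  omega
                exact lt_trans hy1 (colBound hrs s hh y hys)
            rw [hnil] at hu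
            simp at hu
          · rw [restrict_cons_pos _ hf₁] at hu
            simp only [List.head?_cons, Option.mem_some_iff] at hu
            subst hu
            rw [sorted_filter_eq_takeWhile hrsort, sorted_filter_eq_takeWhile h1sort]
            have htw1 : (r₁.takeWhile (· ≤ m)).length ≤ r₁.length :=
              (List.takeWhile_prefix _).length_le
            have hlen : (r₁.takeWhile (· ≤ m)).length ≤ (r.takeWhile (· ≤ m)).length := by
              set t := (r₁.takeWhile (· ≤ m)).length with ht
              rcases Nat.eq_zero_or_pos t with h0 | h0
              · omega
              · have : t - 1 < (r.takeWhile (· ≤ m)).length := by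
                  apply tw_lt_length (by omega)
                  intro k' hk'
                  have hk'1 : k' < t := by omega
                  have h1 : r₁.getD k' 0 ≤ m := tw_getD_le hk'1
                  have h2 : r.getD k' 0 < r₁.getD k' 0 := hcol1 k' (by omega)
                  omega
                omega
            refine ⟨hlen, ?_⟩
            intro k hk
            have hpre := List.takeWhile_prefix (l := r) (p := (· ≤ m))
            have hpre1 := List.takeWhile_prefix (l := r₁) (p := (· ≤ m))
            have hklt : k < (r.takeWhile (· ≤ m)).length := by omega
            rw [← getD_prefix hpre hklt, ← getD_prefix hpre1 hk]
            exact hcol1 k (by omega)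

end RSKPaper
namespace RSKPaper

/-! ### Insertion commutes with restriction -/

lemma bumpPos_cons (x a : ℕ) (l : List ℕ) :
    bumpPos x (a :: l) = if a ≤ x then bumpPos x l + 1 else 0 := by
  by_cases h : a ≤ x <;> simp [bumpPos, List.takeWhile_cons, h]

lemma filter_set_both_gt {r : List ℕ} {p x m : ℕ} (hp : p < r.length)
    (hx : m < x) (hb : m < r.getD p 0) :
    (r.set p x).filter (· ≤ m) = r.filter (· ≤ m) := by
  induction r generalizing p with
  | nil => simp at hp
  | cons a as ih =>
    cases p with
    | zero =>
      simp only [List.getD_cons_zero] at hb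
      simp only [List.set_cons_zero, List.filter_cons]
      rw [if_neg (by simp; omega), if_neg (by simp; omega)]
    | succ p =>
      simp only [List.getD_cons_succ] at hb
      simp only [List.set_cons_succ, List.filter_cons]
      rw [ih (by simpa using hp) hb]

lemma bumpPos_append_lt {x : ℕ} {l₁ t : List ℕ} (h : bumpPos x (l₁ ++ t) < l₁.length) :
    bumpPos x l₁ = bumpPos x (l₁ ++ t) := by
  induction l₁ with
  | nil => simp at h
  | cons a as ih =>
    by_cases hax : a ≤ x
    · have h' : bumpPos x (as ++ t) < as.length := by
        rw [List.cons_append, bumpPos_cons, if_pos hax] at h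
        simpa using h
      rw [List.cons_append, bumpPos_cons, bumpPos_cons, if_pos hax, if_pos hax, ih h']
    · rw [List.cons_append, bumpPos_cons, bumpPos_cons, if_neg hax, if_neg hax]

lemma filter_set_bump {r : List ℕ} {p x m : ℕ} (hp : p < r.length)
    (hall : ∀ k < p, r.getD k 0 ≤ x) (hx : x ≤ m) (hb : r.getD p 0 ≤ m) :
    (r.set p x).filter (· ≤ m) = (r.filter (· ≤ m)).set p x := by
  induction r generalizing p with
  | nil => simp at hp
  | cons a as ih =>
    cases p with
    | zero =>
      simp only [List.getD_cons_zero] at hb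
      simp only [List.set_cons_zero, List.filter_cons]
      rw [if_pos (by simpa using hx), if_pos (by simpa using hb)]
      simp
    | succ p =>
      have ha : a ≤ x := by simpa using hall 0 (by omega)
      have ham : a ≤ m := le_trans ha hx
      simp only [List.getD_cons_succ] at hb
      simp only [List.set_cons_succ, List.filter_cons]
      rw [if_pos (by simpa using ham), if_pos (by simpa using ham), List.set_cons_succ,
        ih (by simpa using hp) (fun k hk => by simpa using hall (k+1) (by omega)) hb]

lemma filter_eq_take {r : List ℕ} {p m : ℕ} (hs : r.Pairwise (· < ·)) (hp : p < r.length)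
    (hall : ∀ k < p, r.getD k 0 ≤ m) (hb : m < r.getD p 0) :
    r.filter (· ≤ m) = r.take p := by
  induction r generalizing p with
  | nil => simp at hp
  | cons a as ih =>
    rw [List.pairwise_cons] at hs
    cases p with
    | zero =>
      simp only [List.getD_cons_zero] at hb
      simp only [List.take_zero, List.filter_cons]
      rw [if_neg (by simp; omega), List.filter_eq_nil_iff.mpr]
      intro y hy
      have := hs.1 y hy
      simp only [decide_eq_true_eq]
      omega
    | succ p =>
      have ha : a ≤ m := by simpa using hall 0 (by omega)
      simp only [List.getD_cons_succ] at hb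
      simp only [List.take_succ_cons, List.filter_cons]
      rw [if_pos (by simpa using ha),
        ih hs.2 (by simpa using hp) (fun k hk => by simpa using hall (k+1) (by omega)) hb]

lemma filter_set_snoc {r : List ℕ} {p x m : ℕ} (hs : r.Pairwise (· < ·)) (hp : p < r.length)
    (hall : ∀ k < p, r.getD k 0 ≤ x) (hx : x ≤ m) (hb : m < r.getD p 0) :
    (r.set p x).filter (· ≤ m) = r.take p ++ [x] := by
  induction r generalizing p with
  | nil => simp at hp
  | cons a as ih =>
    rw [List.pairwise_cons] at hs
    cases p with
    | zero =>
      simp only [List.getD_cons_zero] at hb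
      simp only [List.set_cons_zero, List.filter_cons, List.take_zero]
      rw [if_pos (by simpa using hx), List.filter_eq_nil_iff.mpr]
      · rfl
      · intro y hy
        have := hs.1 y hy
        simp only [decide_eq_true_eq]
        omega
    | succ p =>
      have ha : a ≤ x := by simpa using hall 0 (by omega)
      simp only [List.getD_cons_succ] at hb
      simp only [List.set_cons_succ, List.filter_cons, List.take_succ_cons]
      rw [if_pos (by simp; omega),
        ih hs.2 (by simpa using hp) (fun k hk => by simpa using hall (k+1) (by omega)) hb]
      rfl

lemma take_all_le {r : List ℕ} {p x : ℕ} (hall : ∀ k < p, r.getD k 0 ≤ x) :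
    ∀ a ∈ r.take p, a ≤ x := by
  intro a ha
  obtain ⟨k, hk, rfl⟩ := List.getElem_of_mem ha
  rw [List.getElem_take]
  have hk1 : k < p := by
    have := List.length_take_le p r
    omega
  have hk2 : k < r.length := by
    have := List.length_take (i := p) (l := r)
    omega
  rw [← getD_eq_getElem' _ hk2]
  exact hall k hk1

lemma restrict_insertT_gt {T : List (List ℕ)} {x m : ℕ} (h : StdT T) (hx : m < x) :
    restrict m (insertT T x) = restrict m T := by
  induction T generalizing x with
  | nil =>
    show restrict m [[x]] = restrict m []
    rw [restrict_cons_neg, restrict_nil]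
    rw [List.filter_eq_nil_iff]
    intro a ha
    simp only [List.mem_singleton] at ha
    subst ha
    simp only [decide_eq_true_eq]
    omega
  | cons r rs ih =>
    rcases hI : insRow x r with ⟨r', o⟩
    cases o with
    | none =>
      obtain ⟨h1, _⟩ := insRow_none hI
      have hred : insertT (r :: rs) x = (r ++ [x]) :: rs := by
        rw [insertT_cons, hI, h1]
      rw [hred]
      have hfe : (r ++ [x]).filter (· ≤ m) = r.filter (· ≤ m) := by
        rw [List.filter_append]
        have : [x].filter (· ≤ m) = [] := by
          simp only [List.filter_cons, List.filter_nil]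
          rw [if_neg (by simp; omega)]
        rw [this, List.append_nil]
      by_cases hf : r.filter (· ≤ m) = []
      · rw [restrict_cons_neg _ (by rw [hfe]; exact hf), restrict_cons_neg _ hf]
      · rw [restrict_cons_pos _ (by rw [hfe]; exact hf), restrict_cons_pos _ hf, hfe]
    | some b =>
      obtain ⟨hp, h1, hbv, hxb, hle⟩ := insRow_some hI
      have hred : insertT (r :: rs) x = r.set (bumpPos x r) x :: insertT rs b := by
        rw [insertT_cons, hI, h1]
      rw [hred]
      have hbm : m < b := by omega
      have hfe : (r.set (bumpPos x r) x).filter (· ≤ m) = r.filter (· ≤ m) :=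
        filter_set_both_gt hp hx (by rw [← hbv]; exact hbm)
      have hrec : restrict m (insertT rs b) = restrict m rs := ih (StdT_tail h) hbm
      by_cases hf : r.filter (· ≤ m) = []
      · rw [restrict_cons_neg _ (by rw [hfe]; exact hf), restrict_cons_neg _ hf, hrec]
      · rw [restrict_cons_pos _ (by rw [hfe]; exact hf), restrict_cons_pos _ hf, hfe, hrec]

lemma restrict_insertT_le {T : List (List ℕ)} {x m : ℕ} (h : StdT T) (hx : x ≤ m) :
    restrict m (insertT T x) = insertT (restrict m T) x := by
  induction T generalizing x with
  | nil =>
    show restrict m [[x]] = insertT [] x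
    rw [restrict_cons_pos _ (by simp [List.filter_cons, hx]), restrict_nil]
    simp [List.filter_cons, hx, insertT]
  | cons r rs ih =>
    obtain ⟨hrne, hrsort⟩ := h.1 r (by simp)
    rcases hI : insRow x r with ⟨r', o⟩
    cases o with
    | none =>
      obtain ⟨h1, hall⟩ := insRow_none hI
      have hred : insertT (r :: rs) x = (r ++ [x]) :: rs := by
        rw [insertT_cons, hI, h1]
      have hfr : r.filter (· ≤ m) = r :=
        List.filter_eq_self.mpr (fun a ha => by simp; have := hall a ha; omega)
      have hfrx : (r ++ [x]).filter (· ≤ m) = r ++ [x] :=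
        List.filter_eq_self.mpr (fun a ha => by
          simp only [List.mem_append, List.mem_singleton] at ha
          rcases ha with ha | ha
          · simp; have := hall a ha; omega
          · subst ha; simpa using hx)
      rw [hred, restrict_cons_pos _ (by rw [hfrx]; simp),
        restrict_cons_pos _ (by rw [hfr]; exact hrne), hfr, hfrx, insertT_cons,
        hI, h1]
    | some b =>
      obtain ⟨hp, h1, hbv, hxb, hle⟩ := insRow_some hI
      have hred : insertT (r :: rs) x = r.set (bumpPos x r) x :: insertT rs b := by
        rw [insertT_cons, hI, h1]
      rw [hred]
      set p := bumpPos x r with hpdef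
      have hlex : ∀ k < p, r.getD k 0 ≤ m := fun k hk => le_trans (hle k hk) hx
      by_cases hbm : b ≤ m
      · -- bumped entry survives restriction
        have hfb : r.filter (· ≤ m) = r.takeWhile (· ≤ m) := sorted_filter_eq_takeWhile hrsort m
        have hplt : p < (r.filter (· ≤ m)).length := by
          rw [hfb]
          apply tw_lt_length hp
          intro k' hk'
          rcases Nat.lt_or_ge k' p with hh | hh
          · exact hlex k' hh
          · have : k' = p := by omega
            subst this
            rw [← hbv]; exact hbm
        have hfset : (r.set p x).filter (· ≤ m) = (r.filter (· ≤ m)).set p x :=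
          filter_set_bump hp hle hx (by rw [← hbv]; exact hbm)
        have hpre : r.filter (· ≤ m) <+: r := by
          rw [hfb]; exact List.takeWhile_prefix _
        have hbp : bumpPos x (r.filter (· ≤ m)) = p := by
          obtain ⟨t, ht⟩ := hpre
          have := bumpPos_append_lt (x := x) (l₁ := r.filter (· ≤ m)) (t := t)
            (by rw [ht, ← hpdef]; exact hplt)
          rw [ht, ← hpdef] at this
          exact this
        have hgd : (r.filter (· ≤ m)).getD p 0 = b := by
          rw [← getD_prefix hpre hplt, ← hbv]
        have hIf : insRow x (r.filter (· ≤ m)) =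
            ((r.filter (· ≤ m)).set p x, some b) := by
          rcases insRow_eq x (r.filter (· ≤ m)) with ⟨c1, c2, _, _⟩ | ⟨c1, _, _⟩
          · rw [c2, hbp, hgd]
          · rw [hbp] at c1; omega
        have hrec : restrict m (insertT rs b) = insertT (restrict m rs) b :=
          ih (StdT_tail h) hbm
        rw [restrict_cons_pos _ (by
            rw [hfset]
            intro hc
            have h9 := congrArg List.length hc
            rw [List.length_set] at h9
            simp only [List.length_nil] at h9
            omega),
          hfset, hrec, restrict_cons_pos _ (by
            intro hc
            rw [hc] at hplt
            simp at hplt),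
          insertT_cons, hIf]
      · -- bumped entry is above the cut
        push_neg at hbm
        have hft : r.filter (· ≤ m) = r.take p :=
          filter_eq_take hrsort hp hlex (by rw [← hbv]; exact hbm)
        have hfset : (r.set p x).filter (· ≤ m) = r.take p ++ [x] :=
          filter_set_snoc hrsort hp hle hx (by rw [← hbv]; exact hbm)
        have hgt : restrict m (insertT rs b) = restrict m rs :=
          restrict_insertT_gt (StdT_tail h) hbm
        have hLHS : restrict m (r.set p x :: insertT rs b) =
            (r.take p ++ [x]) :: restrict m rs := by
          rw [restrict_cons_pos _ (by rw [hfset]; simp), hfset, hgt]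
        rw [hLHS]
        by_cases hp0 : r.filter (· ≤ m) = []
        · -- p = 0 and everything below is > m
          have hpz : p = 0 := by
            have := congrArg List.length hft
            rw [hp0] at this
            simp only [List.length_nil, List.length_take] at this
            omega
          have hnil : restrict m rs = [] := by
            apply restrict_eq_nil_of_gt
            intro y hy
            rcases flatten_mem hy with ⟨s, hs, hys⟩
            have h2 := colBound h s hs y hys
            have h3 := hbv
            rw [hpz] at h3
            omega
          rw [restrict_cons_neg _ hp0, hnil, hpz]
          simp [insertT]
        · rw [restrict_cons_pos _ hp0, hft, insertT_cons,
            insRow_none_of_all (take_all_le hle)]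

end RSKPaper
namespace RSKPaper

/-! ### The position of the maximal entry; bumping-path comparison -/

lemma insRow_cons (x a : ℕ) (as : List ℕ) :
    insRow x (a :: as) =
      if a ≤ x then (a :: (insRow x as).1, (insRow x as).2) else (x :: as, some a) := by
  by_cases h : a ≤ x <;> simp [insRow, h]

lemma sorted_mem_max_eq_append {r : List ℕ} {v : ℕ} (hs : r.Pairwise (· < ·))
    (hv : v ∈ r) (hmax : ∀ a ∈ r, a ≤ v) :
    ∃ r₀, r = r₀ ++ [v] ∧ ∀ a ∈ r₀, a < v := by
  induction r with
  | nil => simp at hv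
  | cons a as ih =>
    rw [List.pairwise_cons] at hs
    cases as with
    | nil =>
      simp at hv
      subst hv
      exact ⟨[], rfl, by simp⟩
    | cons b bs =>
      rcases List.mem_cons.mp hv with heq | hv'
      · exfalso
        have h1 := hs.1 b (by simp)
        have h2 := hmax b (by simp)
        omega
      · obtain ⟨r₀, he, hlt⟩ := ih hs.2 hv' (fun y hy => hmax y (by simp [hy]))
        refine ⟨a :: r₀, by rw [List.cons_append, he], ?_⟩
        intro y hy
        rcases List.mem_cons.mp hy with heq | hy'
        · rw [heq]
          have h2 := hmax a (by simp)
          have hne : a ≠ v := by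
            intro hc
            rw [hc] at hs
            have h1 := hs.1 b (by simp)
            have h3 := hmax b (by simp)
            omega
          omega
        · exact hlt y hy'

lemma maxcorner {T : List (List ℕ)} {v : ℕ} (h : StdT T) (hnd : T.flatten.Nodup)
    (hv : v ∈ T.flatten) (hmax : ∀ y ∈ T.flatten, y ≤ v) (hvpos : 0 < v) :
    ∃ d ≤ (restrict (v-1) T).length, T = place (restrict (v-1) T) d v := by
  induction T with
  | nil => simp at hv
  | cons r rs ih =>
    obtain ⟨hrne, hrsort⟩ := h.1 r (by simp)
    simp only [List.flatten_cons, List.nodup_append] at hnd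
    by_cases hvr : v ∈ r
    · have hvnb : v ∉ rs.flatten := fun hc => hnd.2.2 v hvr v hc rfl
      obtain ⟨r₀, he, hlt⟩ := sorted_mem_max_eq_append hrsort hvr
        (fun a ha => hmax a (by simp [ha]))
      have hfr : r.filter (· ≤ v - 1) = r₀ := by
        rw [he, List.filter_append]
        have h1 : r₀.filter (· ≤ v - 1) = r₀ :=
          List.filter_eq_self.mpr (fun a ha => by
            have := hlt a ha
            simp only [decide_eq_true_eq]
            omega)
        have h2 : [v].filter (· ≤ v - 1) = [] := by
          simp only [List.filter_cons, List.filter_nil]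
          rw [if_neg (by simp only [decide_eq_true_eq]; omega)]
        rw [h1, h2, List.append_nil]
      have hrs_self : restrict (v - 1) rs = rs := by
        apply restrict_eq_self (StdT_tail h)
        intro y hy
        have h1 := hmax y (by simp [hy])
        have h2 : y ≠ v := fun hc => hvnb (hc ▸ hy)
        omega
      cases hr0 : r₀ with
      | nil =>
        have hrv : r = [v] := by rw [he, hr0]; rfl
        have hrs_nil : rs = [] := by
          cases rs with
          | nil => rfl
          | cons r₁ rs' =>
            exfalso
            have hchain := h.2
            rw [List.isChain_cons_cons] at hchain
            obtain ⟨⟨hlen1, hcol1⟩, _⟩ := hchain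
            obtain ⟨h1ne, _⟩ := h.1 r₁ (by simp)
            have hl1 : 0 < r₁.length := List.length_pos_iff.mpr h1ne
            have hc := hcol1 0 hl1
            have hm := hmax (r₁.getD 0 0) (by
              rw [List.flatten_cons, List.flatten_cons]
              exact List.mem_append.mpr (Or.inr (List.mem_append.mpr
                (Or.inl (getD_mem' r₁ hl1)))))
            rw [hrv, List.getD_cons_zero] at hc
            omega
        subst hrs_nil
        have hfv : List.filter (· ≤ v - 1) r = [] := by rw [hfr, hr0]
        refine ⟨0, ?_, ?_⟩
        · rw [restrict_cons_neg _ hfv, restrict_nil]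
          simp
        · rw [restrict_cons_neg _ hfv, restrict_nil, hrv]
          rfl
      | cons a r₀' =>
        refine ⟨0, by simp, ?_⟩
        rw [restrict_cons_pos _ (by rw [hfr, hr0]; simp), hfr, hrs_self]
        show r :: rs = (r₀ ++ [v]) :: rs
        rw [he]
    · have hvrs : v ∈ rs.flatten := by
        rcases (by simpa using hv : v ∈ r ∨ v ∈ rs.flatten) with h' | h'
        · exact absurd h' hvr
        · exact h'
      have hfr : r.filter (· ≤ v - 1) = r := by
        apply List.filter_eq_self.mpr
        intro a ha
        have h1 := hmax a (by simp [ha])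
        have h2 : a ≠ v := fun hc => hvr (hc ▸ ha)
        simp only [decide_eq_true_eq]
        omega
      obtain ⟨d, hd, he⟩ := ih (StdT_tail h) hnd.2.1 hvrs
        (fun y hy => hmax y (by simp [hy]))
      refine ⟨d + 1, ?_, ?_⟩
      · rw [restrict_cons_pos _ (by rw [hfr]; exact hrne)]
        simpa using Nat.succ_le_succ hd
      · rw [restrict_cons_pos _ (by rw [hfr]; exact hrne), hfr]
        show r :: rs = r :: place (restrict (v-1) rs) d v
        rw [← he]

lemma insRow_append_none {x v : ℕ} {r : List ℕ} (hall : ∀ a ∈ r, a ≤ x) (hx : x < v) :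
    insRow x (r ++ [v]) = (r ++ [x], some v) := by
  induction r with
  | nil =>
    rw [List.nil_append, List.nil_append]
    rw [show ([v] : List ℕ) = v :: [] from rfl, insRow_cons, if_neg (by omega)]
  | cons a as ih =>
    have ha : a ≤ x := hall a (by simp)
    rw [List.cons_append, insRow_cons, if_pos ha,
      ih (fun y hy => hall y (by simp [hy]))]
    rfl

lemma insRow_append_some {x v b : ℕ} {r r' : List ℕ} (h : insRow x r = (r', some b)) :
    insRow x (r ++ [v]) = (r' ++ [v], some b) := by
  induction r generalizing r' with
  | nil => simp [insRow] at h
  | cons a as ih =>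
    rw [insRow_cons] at h
    by_cases ha : a ≤ x
    · rw [if_pos ha] at h
      rcases hI : insRow x as with ⟨as', o⟩
      rw [hI] at h
      injection h with h1 h2
      cases o with
      | none => exact absurd h2 (by simp)
      | some c =>
        have hcb : c = b := by injection h2
        subst hcb
        rw [List.cons_append, insRow_cons, if_pos ha, ih hI]
        rw [← h1]
        rfl
    · rw [if_neg ha] at h
      injection h with h1 h2
      have hab : a = b := by injection h2
      subst hab
      rw [List.cons_append, insRow_cons, if_neg ha, ← h1]
      rfl

lemma insDepth_zero_of_le {T : List (List ℕ)} {v : ℕ}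
    (hall : ∀ y ∈ T.flatten, y ≤ v) : insDepth T v = 0 := by
  cases T with
  | nil => rfl
  | cons r rs =>
    rw [insDepth_cons, insRow_none_of_all (fun a ha => hall a (by simp [ha]))]

lemma insDepth_place {T : List (List ℕ)} {rM x v : ℕ}
    (hall : ∀ y ∈ T.flatten, y < v) (hx : x < v) (hrM : rM ≤ T.length) :
    insDepth (place T rM v) x =
      if insDepth T x = rM then insDepth T x + 1 else insDepth T x := by
  induction T generalizing rM x with
  | nil =>
    have h0 : rM = 0 := by simpa using hrM
    subst h0
    show insDepth [[v]] x = _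
    rw [insDepth_cons, show insRow x [v] = (x :: [], some v) from by
      rw [show ([v] : List ℕ) = v :: [] from rfl, insRow_cons, if_neg (by omega)]]
    show insDepth [] v + 1 = _
    simp [insDepth]
  | cons r rs ih =>
    have hallr : ∀ a ∈ r, a < v := fun a ha => hall a (by simp [ha])
    have hallrs : ∀ y ∈ rs.flatten, y < v := fun y hy => hall y (by simp [hy])
    cases rM with
    | zero =>
      show insDepth ((r ++ [v]) :: rs) x = _
      rcases hI : insRow x r with ⟨r', o⟩
      cases o with
      | none =>
        obtain ⟨_, hallx⟩ := insRow_none hI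
        rw [insDepth_cons, insRow_append_none hallx hx]
        show insDepth rs v + 1 = _
        rw [insDepth_zero_of_le (fun y hy => le_of_lt (hallrs y hy))]
        have hd : insDepth (r :: rs) x = 0 := by rw [insDepth_cons, hI]
        rw [hd]
        simp
      | some b =>
        rw [insDepth_cons, insRow_append_some hI]
        show insDepth rs b + 1 = _
        have hd : insDepth (r :: rs) x = insDepth rs b + 1 := by rw [insDepth_cons, hI]
        rw [hd, if_neg (by omega)]
    | succ rM =>
      show insDepth (r :: place rs rM v) x = _
      rcases hI : insRow x r with ⟨r', o⟩
      cases o with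
      | none =>
        have h1 : insDepth (r :: place rs rM v) x = 0 := by rw [insDepth_cons, hI]
        have h2 : insDepth (r :: rs) x = 0 := by rw [insDepth_cons, hI]
        rw [h1, h2, if_neg (by omega)]
      | some b =>
        obtain ⟨hp, _, hbv, _, _⟩ := insRow_some hI
        have hbmem : b ∈ r := by rw [hbv]; exact getD_mem' r hp
        have hb : b < v := hallr b hbmem
        have h1 : insDepth (r :: place rs rM v) x = insDepth (place rs rM v) b + 1 := by
          rw [insDepth_cons, hI]
        have h2 : insDepth (r :: rs) x = insDepth rs b + 1 := by
          rw [insDepth_cons, hI]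
        rw [h1, h2, ih hallrs hb (by simpa using hrM)]
        by_cases he : insDepth rs b = rM
        · rw [if_pos he, if_pos (by omega)]
        · rw [if_neg he, if_neg (by omega)]

end RSKPaper
namespace RSKPaper

/-! ### Partial insertion tableaux and the growth local rule -/

def pword (v : ℕ → ℕ) (i j : ℕ) : List ℕ :=
  (List.range j).filterMap fun k => if v k ≤ i then some (v k) else none

def ptab (v : ℕ → ℕ) (i j : ℕ) : List (List ℕ) :=
  (pword v i j).foldl insertT []

def locF (lam mu nu : List ℕ) (m : Bool) : List ℕ :=
  if m then incr lam 0
  else if mu = lam then nu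
  else if nu = lam then mu
  else if mu = nu then incr mu (diffIdx lam mu + 1)
  else sup mu nu

lemma locF_symm (lam mu nu : List ℕ) (m : Bool) : locF lam mu nu m = locF lam nu mu m := by
  cases m with
  | true => rfl
  | false =>
    show (if mu = lam then nu else _) = (if nu = lam then mu else _)
    by_cases h1 : mu = lam <;> by_cases h2 : nu = lam <;> by_cases h3 : mu = nu <;>
      simp only [h1, h2, h3, if_pos, if_neg, if_true, if_false] <;>
      first
        | rfl
        | (exfalso; apply h3; rw [h1, h2])
        | (exfalso; apply h1; rw [h3, h2])
        | (exfalso; apply h2; rw [← h3, h1])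
        | rw [h1]
        | rw [h2]
        | rw [h3]
        | (rw [if_neg (fun hc => h3 hc.symm)]; exact sup_comm mu nu)

lemma locF_true (lam mu nu : List ℕ) : locF lam mu nu true = incr lam 0 := rfl

lemma locF_false (lam mu nu : List ℕ) : locF lam mu nu false =
    (if mu = lam then nu
     else if nu = lam then mu
     else if mu = nu then incr mu (diffIdx lam mu + 1)
     else sup mu nu) := rfl

@[simp] lemma pword_zero (v : ℕ → ℕ) (i : ℕ) : pword v i 0 = [] := rfl
@[simp] lemma ptab_zero (v : ℕ → ℕ) (i : ℕ) : ptab v i 0 = [] := rfl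

lemma pword_succ (v : ℕ → ℕ) (i j : ℕ) :
    pword v i (j+1) = pword v i j ++ (if v j ≤ i then [v j] else []) := by
  unfold pword
  rw [List.range_succ, List.filterMap_append]
  congr 1
  by_cases h : v j ≤ i <;> simp [h]

lemma mem_pword {v : ℕ → ℕ} {i j y : ℕ} :
    y ∈ pword v i j ↔ (∃ k < j, v k = y) ∧ y ≤ i := by
  constructor
  · intro h
    obtain ⟨k, hk, he⟩ := List.mem_filterMap.mp h
    by_cases hc : v k ≤ i
    · rw [if_pos hc] at he
      injection he with he
      subst he
      exact ⟨⟨k, List.mem_range.mp hk, rfl⟩, hc⟩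
    · rw [if_neg hc] at he
      exact absurd he (by simp)
  · rintro ⟨⟨k, hk, rfl⟩, hy⟩
    exact List.mem_filterMap.mpr ⟨k, List.mem_range.mpr hk, by rw [if_pos hy]⟩

lemma pword_map (v : ℕ → ℕ) (i j : ℕ) :
    pword v i j = ((List.range j).filter (fun k => v k ≤ i)).map v := by
  induction j with
  | zero => rfl
  | succ j ih =>
    rw [pword_succ, List.range_succ, List.filter_append, List.map_append, ← ih]
    congr 1
    by_cases h : v j ≤ i <;> simp [h]

lemma pword_nodup {v : ℕ → ℕ} (hinj : Function.Injective v) (i j : ℕ) :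
    (pword v i j).Nodup := by
  rw [pword_map]
  exact ((List.nodup_range (n := j)).filter _).map hinj

lemma pword_bot {v : ℕ → ℕ} (hpos : ∀ k, 1 ≤ v k) (j : ℕ) : pword v 0 j = [] := by
  induction j with
  | zero => rfl
  | succ j ih =>
    rw [pword_succ, if_neg (by have := hpos j; omega), List.append_nil, ih]

lemma pword_top_eq {v : ℕ → ℕ} {i j : ℕ} (h : ∀ k < j, v k ≠ i + 1) :
    pword v (i+1) j = pword v i j := by
  induction j with
  | zero => rfl
  | succ j ih =>
    rw [pword_succ, pword_succ, ih (fun k hk => h k (by omega))]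
    congr 1
    have hne := h j (by omega)
    by_cases hc : v j ≤ i
    · rw [if_pos hc, if_pos (by omega)]
    · rw [if_neg hc, if_neg (by omega)]

lemma ptab_succ (v : ℕ → ℕ) (i j : ℕ) :
    ptab v i (j+1) = if v j ≤ i then insertT (ptab v i j) (v j) else ptab v i j := by
  unfold ptab
  rw [pword_succ]
  by_cases h : v j ≤ i <;> simp [h, List.foldl_append]

lemma ptab_flatten_perm (v : ℕ → ℕ) (i j : ℕ) :
    (ptab v i j).flatten.Perm (pword v i j) := by
  induction j with
  | zero => simp
  | succ j ih =>
    rw [ptab_succ, pword_succ]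
    by_cases h : v j ≤ i
    · rw [if_pos h, if_pos h]
      refine (flatten_insertT _ _).trans ?_
      refine (ih.cons (v j)).trans ?_
      exact (List.perm_append_singleton _ _).symm
    · rw [if_neg h, if_neg h, List.append_nil]
      exact ih

lemma ptab_std {v : ℕ → ℕ} (hinj : Function.Injective v) (i j : ℕ) :
    StdT (ptab v i j) := by
  induction j with
  | zero => exact ⟨by simp, by simp⟩
  | succ j ih =>
    rw [ptab_succ]
    by_cases h : v j ≤ i
    · rw [if_pos h]
      apply insertT_std _ _ ih
      rw [List.nodup_cons]
      constructor
      · intro hc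
        have := mem_pword.mp ((ptab_flatten_perm v i j).mem_iff.mp hc)
        obtain ⟨⟨k, hk, he⟩, _⟩ := this
        exact absurd (hinj he) (by omega)
      · exact ((ptab_flatten_perm v i j).nodup_iff).mpr (pword_nodup hinj i j)
    · rw [if_neg h]
      exact ih

lemma ptab_entries_le {v : ℕ → ℕ} {i j y : ℕ} (h : y ∈ (ptab v i j).flatten) :
    y ≤ i := (mem_pword.mp ((ptab_flatten_perm v i j).mem_iff.mp h)).2

lemma restrict_ptab {v : ℕ → ℕ} (hinj : Function.Injective v) {m i : ℕ} (hm : m ≤ i)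
    (j : ℕ) : restrict m (ptab v i j) = ptab v m j := by
  induction j with
  | zero => simp
  | succ j ih =>
    rw [ptab_succ, ptab_succ]
    by_cases h1 : v j ≤ m
    · rw [if_pos h1, if_pos (le_trans h1 hm), restrict_insertT_le (ptab_std hinj i j) h1, ih]
    · rw [if_neg h1]
      by_cases h2 : v j ≤ i
      · rw [if_pos h2, restrict_insertT_gt (ptab_std hinj i j) (by omega), ih]
      · rw [if_neg h2, ih]

lemma shape_len (T : List (List ℕ)) : (shape T).length = T.length := by simp [shape]

lemma local_rule {v : ℕ → ℕ} (hinj : Function.Injective v) (i j : ℕ) :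
    shape (ptab v (i+1) (j+1)) =
      locF (shape (ptab v i j)) (shape (ptab v i (j+1)))
        (shape (ptab v (i+1) j)) (decide (v j = i + 1)) := by
  by_cases hm : v j = i + 1
  · -- new entry is the largest letter: appended to row 1
    have hmu : ptab v i (j+1) = ptab v i j := by
      rw [ptab_succ, if_neg (by omega)]
    have hnu : ptab v (i+1) j = ptab v i j := by
      unfold ptab
      rw [pword_top_eq (fun k hk hc => absurd (hinj (hc.trans hm.symm)) (by omega))]
    have hrho : ptab v (i+1) (j+1) = insertT (ptab v (i+1) j) (v j) := by
      rw [ptab_succ, if_pos (by omega)]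
    have hzero : insDepth (ptab v (i+1) j) (v j) = 0 :=
      insDepth_zero_of_le (fun y hy => by have := ptab_entries_le hy; omega)
    rw [hrho, shape_insertT, hzero, hnu,
      show decide (v j = i + 1) = true by simp [hm], locF_true]
  · rw [show decide (v j = i + 1) = false by simp [hm]]
    by_cases hgt : i + 1 < v j
    · -- the letter is invisible at both levels
      have hmu : ptab v i (j+1) = ptab v i j := by rw [ptab_succ, if_neg (by omega)]
      have hrho : ptab v (i+1) (j+1) = ptab v (i+1) j := by
        rw [ptab_succ, if_neg (by omega)]
      rw [hrho, hmu, locF_false, if_pos rfl]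
    · -- v j ≤ i
      have hle : v j ≤ i := by omega
      have hdTle : insDepth (ptab v i j) (v j) ≤ (shape (ptab v i j)).length := by
        rw [shape_len]; exact insDepth_le _ _
      have hmu : shape (ptab v i (j+1)) =
          incr (shape (ptab v i j)) (insDepth (ptab v i j) (v j)) := by
        rw [ptab_succ, if_pos hle, shape_insertT]
      have hmune : incr (shape (ptab v i j)) (insDepth (ptab v i j) (v j)) ≠
          shape (ptab v i j) := incr_ne hdTle
      by_cases hex : ∃ k < j, v k = i + 1
      · have hmem : i + 1 ∈ (ptab v (i+1) j).flatten :=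
          (ptab_flatten_perm v (i+1) j).mem_iff.mpr
            (mem_pword.mpr ⟨hex, le_refl _⟩)
        obtain ⟨rM, hrMle, hplace⟩ := maxcorner (ptab_std hinj (i+1) j)
          (((ptab_flatten_perm v (i+1) j).nodup_iff).mpr (pword_nodup hinj (i+1) j))
          hmem (fun y hy => ptab_entries_le hy) (by omega)
        have hres : restrict (i + 1 - 1) (ptab v (i+1) j) = ptab v i j := by
          rw [show i + 1 - 1 = i from rfl]
          exact restrict_ptab hinj (by omega) j
        rw [hres] at hplace hrMle
        have hrMle' : rM ≤ (shape (ptab v i j)).length := by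
          rw [shape_len]; exact hrMle
        have hnu : shape (ptab v (i+1) j) = incr (shape (ptab v i j)) rM := by
          rw [hplace, shape_place]
        have hrho : shape (ptab v (i+1) (j+1)) =
            incr (shape (ptab v (i+1) j)) (insDepth (ptab v (i+1) j) (v j)) := by
          rw [ptab_succ, if_pos (by omega), shape_insertT]
        have hd' : insDepth (ptab v (i+1) j) (v j) =
            if insDepth (ptab v i j) (v j) = rM then insDepth (ptab v i j) (v j) + 1
            else insDepth (ptab v i j) (v j) := by
          conv_lhs => rw [hplace]
          exact insDepth_place (fun y hy => by have := ptab_entries_le hy; omega)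
            (by omega) hrMle
        by_cases hdr : insDepth (ptab v i j) (v j) = rM
        · rw [hrho, hd', if_pos hdr, hnu, ← hdr, hmu, locF_false, if_neg hmune,
            if_neg hmune, if_pos rfl, diffIdx_incr hdTle]
        · rw [hrho, hd', if_neg hdr, hnu, hmu, locF_false, if_neg hmune,
            if_neg (incr_ne hrMle'), if_neg (fun hc => hdr (incr_inj hdTle hrMle' hc)),
            sup_incr_incr hdr hdTle hrMle', incr_comm hdTle hrMle']
      · have hnu : ptab v (i+1) j = ptab v i j := by
          unfold ptab
          rw [pword_top_eq (fun k hk hc => hex ⟨k, hk, hc⟩)]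
        have hrho : shape (ptab v (i+1) (j+1)) =
            incr (shape (ptab v i j)) (insDepth (ptab v i j) (v j)) := by
          rw [ptab_succ, if_pos (by omega), hnu, shape_insertT]
        rw [hrho, hmu, hnu, locF_false, if_neg hmune, if_pos rfl]

lemma growth_symm {v w : ℕ → ℕ} (hv : Function.Injective v) (hw : Function.Injective w)
    (hvpos : ∀ k, 1 ≤ v k) (hwpos : ∀ k, 1 ≤ w k)
    (hinv : ∀ i j, v j = i + 1 ↔ w i = j + 1) :
    ∀ N i j, i + j ≤ N → shape (ptab v i j) = shape (ptab w j i) := by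
  intro N
  induction N with
  | zero =>
    intro i j hij
    have : i = 0 ∧ j = 0 := by omega
    obtain ⟨rfl, rfl⟩ := this
    rfl
  | succ N ihN =>
    intro i j hij
    cases i with
    | zero =>
      unfold ptab
      rw [pword_bot hvpos, pword_zero]
    | succ i =>
      cases j with
      | zero =>
        unfold ptab
        rw [pword_bot hwpos, pword_zero]
      | succ j =>
        rw [local_rule hv i j, local_rule hw j i]
        rw [ihN i j (by omega), ihN i (j+1) (by omega), ihN (i+1) j (by omega)]
        rw [show decide (v j = i + 1) = decide (w i = j + 1) by
          by_cases hc : v j = i + 1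
          · rw [decide_eq_true hc, decide_eq_true ((hinv i j).mp hc)]
          · rw [decide_eq_false hc, decide_eq_false (fun hcc => hc ((hinv i j).mpr hcc))]]
        exact locF_symm _ _ _ _

end RSKPaper
namespace RSKPaper

/-! ### The recording tableau and the final assembly -/

lemma insPQ_cons_none {x : ℕ} {r r' : List ℕ} (rs qs : List (List ℕ)) (lbl : ℕ)
    (h : insRow x r = (r', none)) :
    insPQ (r :: rs) qs x lbl = (r' :: rs, (qs.headD [] ++ [lbl]) :: qs.tail) := by
  rw [insPQ, h]

lemma insPQ_cons_some {x b : ℕ} {r r' : List ℕ} (rs qs : List (List ℕ)) (lbl : ℕ)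
    (h : insRow x r = (r', some b)) :
    insPQ (r :: rs) qs x lbl =
      (r' :: (insPQ rs qs.tail b lbl).1, qs.headD [] :: (insPQ rs qs.tail b lbl).2) := by
  rw [insPQ, h]

lemma insPQ_eq {P Q : List (List ℕ)} (hlen : Q.length = P.length) (x lbl : ℕ) :
    insPQ P Q x lbl = (insertT P x, place Q (insDepth P x) lbl) := by
  induction P generalizing Q x with
  | nil =>
    have : Q = [] := List.length_eq_zero_iff.mp (by simpa using hlen)
    subst this
    rfl
  | cons r rs ih =>
    cases Q with
    | nil => simp at hlen
    | cons q qs =>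
      have hlen' : qs.length = rs.length := by simpa using hlen
      rcases hI : insRow x r with ⟨r', o⟩
      cases o with
      | none =>
        have e1 : insertT (r :: rs) x = r' :: rs := by rw [insertT_cons, hI]
        have e2 : insDepth (r :: rs) x = 0 := by rw [insDepth_cons, hI]
        rw [insPQ_cons_none _ _ _ hI, e1, e2]
        rfl
      | some b =>
        have e1 : insertT (r :: rs) x = r' :: insertT rs b := by rw [insertT_cons, hI]
        have e2 : insDepth (r :: rs) x = insDepth rs b + 1 := by rw [insDepth_cons, hI]
        rw [insPQ_cons_some _ _ _ hI, e1, e2]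
        simp only [List.tail_cons, List.headD_cons]
        rw [ih hlen']
        rfl

lemma insPQ_fst (P Q : List (List ℕ)) (x lbl : ℕ) :
    (insPQ P Q x lbl).1 = insertT P x := by
  induction P generalizing Q x with
  | nil => rfl
  | cons r rs ih =>
    rcases hI : insRow x r with ⟨r', o⟩
    cases o with
    | none =>
      rw [insPQ_cons_none _ _ _ hI]
      have e1 : insertT (r :: rs) x = r' :: rs := by rw [insertT_cons, hI]
      rw [e1]
    | some b =>
      rw [insPQ_cons_some _ _ _ hI]
      show r' :: (insPQ rs Q.tail b lbl).1 = _
      rw [ih, insertT_cons, hI]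

lemma RSstep_eq {P Q : List (List ℕ)} (p : ℕ × ℕ) (hlen : Q.length = P.length) :
    RSstep (P, Q) p = (insertT P p.2, place Q (insDepth P p.2) p.1) :=
  insPQ_eq hlen p.2 p.1

lemma foldl_fst (L : List (ℕ × ℕ)) : ∀ P Q : List (List ℕ),
    (L.foldl RSstep (P, Q)).1 = L.foldl (fun t p => insertT t p.2) P := by
  induction L with
  | nil => intro P Q; rfl
  | cons p L ih =>
    intro P Q
    rw [List.foldl_cons, List.foldl_cons]
    have h1 : RSstep (P, Q) p = ((insPQ P Q p.2 p.1).1, (insPQ P Q p.2 p.1).2) := rfl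
    rw [h1, ih, insPQ_fst]

/-! ### The word function of a permutation -/

def pwFun (n : ℕ) (σ : Equiv.Perm (Fin n)) : ℕ → ℕ :=
  fun k => if h : k < n then (σ ⟨k, h⟩ : Fin n).val + 1 else k + 1

lemma pwFun_lt {n : ℕ} {σ : Equiv.Perm (Fin n)} {k : ℕ} (h : k < n) :
    pwFun n σ k = (σ ⟨k, h⟩).val + 1 := dif_pos h

lemma pwFun_ge {n : ℕ} {σ : Equiv.Perm (Fin n)} {k : ℕ} (h : ¬ k < n) :
    pwFun n σ k = k + 1 := dif_neg h

lemma pwFun_pos (n : ℕ) (σ : Equiv.Perm (Fin n)) : ∀ k, 1 ≤ pwFun n σ k := by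
  intro k
  unfold pwFun
  split <;> omega

lemma pwFun_le {n : ℕ} {σ : Equiv.Perm (Fin n)} {k : ℕ} (h : k < n) :
    pwFun n σ k ≤ n := by
  rw [pwFun_lt h]
  have := (σ ⟨k, h⟩).isLt
  omega

lemma pwFun_inj (n : ℕ) (σ : Equiv.Perm (Fin n)) : Function.Injective (pwFun n σ) := by
  intro a b hab
  by_cases ha : a < n <;> by_cases hb : b < n
  · rw [pwFun_lt ha, pwFun_lt hb] at hab
    have h2 : σ ⟨a, ha⟩ = σ ⟨b, hb⟩ := Fin.ext (by omega)
    have h3 := σ.injective h2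
    simpa using congrArg Fin.val h3
  · rw [pwFun_lt ha, pwFun_ge hb] at hab
    have := (σ ⟨a, ha⟩).isLt
    omega
  · rw [pwFun_ge ha, pwFun_lt hb] at hab
    have := (σ ⟨b, hb⟩).isLt
    omega
  · rw [pwFun_ge ha, pwFun_ge hb] at hab
    omega

lemma pwFun_inv (n : ℕ) (σ : Equiv.Perm (Fin n)) :
    ∀ i j, pwFun n σ j = i + 1 ↔ pwFun n σ⁻¹ i = j + 1 := by
  intro i j
  by_cases hi : i < n <;> by_cases hj : j < n
  · rw [pwFun_lt hj, pwFun_lt hi]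
    constructor
    · intro h
      have h2 : σ ⟨j, hj⟩ = ⟨i, hi⟩ := by
        apply Fin.ext
        show (σ ⟨j, hj⟩).val = i
        omega
      have h3 : σ⁻¹ ⟨i, hi⟩ = ⟨j, hj⟩ := by rw [← h2]; simp
      rw [h3]
    · intro h
      have h2 : σ⁻¹ ⟨i, hi⟩ = ⟨j, hj⟩ := by
        apply Fin.ext
        show (σ⁻¹ ⟨i, hi⟩).val = j
        omega
      have h3 : σ ⟨j, hj⟩ = ⟨i, hi⟩ := by rw [← h2]; simp
      rw [h3]
  · rw [pwFun_ge hj, pwFun_lt hi]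
    constructor
    · intro h
      omega
    · intro h
      have := (σ⁻¹ ⟨i, hi⟩).isLt
      omega
  · rw [pwFun_lt hj, pwFun_ge hi]
    constructor
    · intro h
      have := (σ ⟨j, hj⟩).isLt
      omega
    · intro h
      omega
  · rw [pwFun_ge hj, pwFun_ge hi]
    omega

lemma pwFun_word (n : ℕ) (σ : Equiv.Perm (Fin n)) :
    pword (pwFun n σ) n n = (List.finRange n).map (fun k => (σ k).val + 1) := by
  rw [pword_map]
  rw [List.filter_eq_self.mpr (fun k hk => by
    simp only [decide_eq_true_eq]
    exact pwFun_le (List.mem_range.mp hk))]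
  rw [← List.map_coe_finRange_eq_range, List.map_map]
  apply List.map_congr_left
  intro k _
  show pwFun n σ k.val = (σ k).val + 1
  rw [pwFun_lt k.isLt]

/-! ### Main theorem -/

theorem rs_inv' (n : ℕ) (w : Equiv.Perm (Fin n)) :
    (RS w⁻¹).1 = (RS w).2 := by
  have hsym : ∀ i j, shape (ptab (pwFun n w) i j) = shape (ptab (pwFun n w⁻¹) j i) :=
    fun i j => growth_symm (pwFun_inj n w) (pwFun_inj n w⁻¹) (pwFun_pos n w)
      (pwFun_pos n w⁻¹) (pwFun_inv n w) (i + j) i j (le_refl _)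
  have hupos := pwFun_pos n w⁻¹
  have huinj := pwFun_inj n w⁻¹
  have hT : ∀ j, j ≤ n → restrict j (ptab (pwFun n w⁻¹) n n) = ptab (pwFun n w⁻¹) j n :=
    fun j hj => restrict_ptab huinj hj n
  have hshapeQ : ∀ j, j ≤ n →
      shape (restrict j (ptab (pwFun n w⁻¹) n n)) = shape (ptab (pwFun n w) n j) := by
    intro j hj
    rw [hT j hj, ← hsym n j]
  -- the main loop invariant
  have key : ∀ j, j ≤ n →
      (((List.finRange n).map (fun k => ((k : Fin n).val + 1, (w k).val + 1))).take j).foldl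
          RSstep ([], []) =
        (ptab (pwFun n w) n j, restrict j (ptab (pwFun n w⁻¹) n n)) := by
    intro j
    induction j with
    | zero =>
      intro _
      rw [List.take_zero, List.foldl_nil]
      have h0 : restrict 0 (ptab (pwFun n w⁻¹) n n) = [] := by
        apply restrict_eq_nil_of_gt
        intro y hy
        obtain ⟨⟨k, _, he⟩, _⟩ :=
          mem_pword.mp ((ptab_flatten_perm (pwFun n w⁻¹) n n).mem_iff.mp hy)
        have := hupos k
        omega
      rw [h0]
      rfl
    | succ j ihj =>
      intro hj1
      have hj : j < n := by omega
      have prev := ihj (by omega)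
      have hlenL : j < (((List.finRange n).map
          (fun k => ((k : Fin n).val + 1, (w k).val + 1)))).length := by
        simp
        omega
      have hget : (((List.finRange n).map
          (fun k => ((k : Fin n).val + 1, (w k).val + 1))))[j]? =
            some (j + 1, pwFun n w j) := by
        rw [List.getElem?_eq_getElem hlenL, List.getElem_map, List.getElem_finRange]
        have hc : (Fin.cast (List.length_finRange) ⟨j, by simpa using hj⟩ : Fin n)
            = ⟨j, hj⟩ := Fin.ext rfl
        rw [hc, pwFun_lt hj]
      rw [List.take_succ, hget, List.foldl_append, prev]
      simp only [Option.toList_some, List.foldl_cons, List.foldl_nil]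
      have hlen : (restrict j (ptab (pwFun n w⁻¹) n n)).length =
          (ptab (pwFun n w) n j).length := by
        have h1 := congrArg List.length (hshapeQ j (by omega))
        rw [shape_len, shape_len] at h1
        exact h1
      rw [RSstep_eq _ hlen]
      have hPnew : insertT (ptab (pwFun n w) n j) (pwFun n w j) =
          ptab (pwFun n w) n (j+1) := by
        rw [ptab_succ, if_pos (pwFun_le hj)]
      have hQnew : place (restrict j (ptab (pwFun n w⁻¹) n n))
          (insDepth (ptab (pwFun n w) n j) (pwFun n w j)) (j + 1) =
            restrict (j+1) (ptab (pwFun n w⁻¹) n n) := by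
        have hT'' : restrict (j+1) (ptab (pwFun n w⁻¹) n n) = ptab (pwFun n w⁻¹) (j+1) n :=
          restrict_ptab huinj (by omega) n
        have hmem : (j+1) ∈ (ptab (pwFun n w⁻¹) (j+1) n).flatten := by
          apply (ptab_flatten_perm (pwFun n w⁻¹) (j+1) n).mem_iff.mpr
          apply mem_pword.mpr
          refine ⟨⟨((w ⟨j, hj⟩ : Fin n) : ℕ), (w ⟨j, hj⟩).isLt, ?_⟩, le_refl _⟩
          rw [pwFun_lt (σ := w⁻¹) (w ⟨j, hj⟩).isLt]
          have he : (⟨((w ⟨j, hj⟩ : Fin n) : ℕ), (w ⟨j, hj⟩).isLt⟩ : Fin n) = w ⟨j, hj⟩ :=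
            Fin.ext rfl
          rw [he]; simp
        obtain ⟨rM, hrMle, hplace⟩ := maxcorner (ptab_std huinj (j+1) n)
          ((ptab_flatten_perm (pwFun n w⁻¹) (j+1) n).nodup_iff.mpr
            (pword_nodup huinj _ _)) hmem
          (fun y hy => ptab_entries_le hy) (by omega)
        have hres2 : restrict ((j+1)-1) (ptab (pwFun n w⁻¹) (j+1) n) =
            restrict j (ptab (pwFun n w⁻¹) n n) := by
          rw [show (j+1)-1 = j from rfl, restrict_ptab huinj (by omega) n,
            hT j (by omega)]
        rw [hres2] at hplace hrMle
        have hs1 : shape (ptab (pwFun n w⁻¹) (j+1) n) =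
            incr (shape (ptab (pwFun n w) n j)) rM := by
          rw [hplace, shape_place, hshapeQ j (by omega)]
        have hs2 : shape (ptab (pwFun n w⁻¹) (j+1) n) =
            incr (shape (ptab (pwFun n w) n j))
              (insDepth (ptab (pwFun n w) n j) (pwFun n w j)) := by
          rw [← hsym n (j+1), ptab_succ, if_pos (pwFun_le hj), shape_insertT]
        have hrM : rM = insDepth (ptab (pwFun n w) n j) (pwFun n w j) := by
          apply incr_inj (l := shape (ptab (pwFun n w) n j)) ?_ ?_ (hs1.symm.trans hs2)
          · rw [shape_len, ← hlen]
            exact hrMle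
          · rw [shape_len]
            exact insDepth_le _ _
        rw [hT'', hplace, hrM]
      show (insertT (ptab (pwFun n w) n j) (pwFun n w j),
          place (restrict j (ptab (pwFun n w⁻¹) n n))
            (insDepth (ptab (pwFun n w) n j) (pwFun n w j)) (j + 1)) = _
      rw [hPnew, hQnew]
  -- conclude
  have hfin := key n (le_refl n)
  rw [List.take_of_length_le (by simp)] at hfin
  have hRSw : RS w = (((List.finRange n).map
      (fun k => ((k : Fin n).val + 1, (w k).val + 1))).foldl RSstep ([], [])) := rfl
  have hres_n : restrict n (ptab (pwFun n w⁻¹) n n) = ptab (pwFun n w⁻¹) n n :=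
    restrict_eq_self (ptab_std huinj n n) (fun y hy => ptab_entries_le hy)
  have hRHS : (RS w).2 = ptab (pwFun n w⁻¹) n n := by
    rw [hRSw, hfin, hres_n]
  have hLHS : (RS w⁻¹).1 = ptab (pwFun n w⁻¹) n n := by
    have h1 : (RS w⁻¹).1 = (((List.finRange n).map
        (fun k => ((k : Fin n).val + 1, ((w⁻¹ : Equiv.Perm (Fin n)) k).val + 1))).foldl
          RSstep ([], [])).1 := rfl
    rw [h1, foldl_fst]
    show _ = (pword (pwFun n w⁻¹) n n).foldl insertT []
    rw [pwFun_word n w⁻¹, List.foldl_map, List.foldl_map]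
  rw [hLHS, hRHS]

end RSKPaper

namespace RSKPaper

/-- For a permutation `w` of `{1,...,n}`, the insertion tableau of
`w⁻¹` equals the recording tableau of `w`: `P(w⁻¹) = Q(w)`. -/
theorem rs_inv (n : ℕ) (w : Equiv.Perm (Fin n)) :
    (RS w⁻¹).1 = (RS w).2 := by
  exact rs_inv' n w

end RSKPaper
end

section
/- Let z : ℝ_{>0} → ℝ^n be a collision path, i.e. z_1(t) < ... < z_n(t) for all t, each z_i is monotonic, lim_{t→0} z_i(t) = 0 and lim_{t→∞} z_i(t) = ∞ for all i, and lim_{t→0} z_{i+1}(t)/z_i(t) = lim_{t→∞} (z_{i+1}(t) − z_i(t)) = ∞ for all i < n. Then for fixed s ∈ (0,1], the deformed path defined by z_i(s,t) = z_i(st) for t ≤ 1 and z_i(s,t) = z_i(t−1+s) for t > 1 (for 1 ≤ i ≤ n−1), and z_n(s,t) = ((2−t)/(1−t+s))·z_n(t) for t ≤ 1 and z_n(s,t) = s^{-1} z_n(t) for t > 1, is again a collision path. -/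
open Filter

namespace GaudinPaper

/-- A collision path: `n` ordered real particles, with monotonic coordinates, which
simultaneously collide at `0` as `t → 0⁺` and at `∞` as `t → ∞`, in a specified
asymptotic order. -/
def IsCollisionPath (n : ℕ) (z : ℝ → Fin n → ℝ) : Prop :=
  -- ordered
  (∀ t : ℝ, 0 < t → ∀ i j : Fin n, i < j → z t i < z t j) ∧
  -- monotonicity
  (∀ i : Fin n, MonotoneOn (fun t => z t i) (Set.Ioi (0 : ℝ)) ∨
    AntitoneOn (fun t => z t i) (Set.Ioi (0 : ℝ))) ∧
  -- limiting behaviour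
  (∀ i : Fin n,
    Tendsto (fun t => z t i) (nhdsWithin 0 (Set.Ioi (0 : ℝ))) (nhds 0) ∧
    Tendsto (fun t => z t i) atTop atTop) ∧
  -- asymptotic ordering
  (∀ i : Fin n, ∀ h : i.val + 1 < n,
    Tendsto (fun t => z t ⟨i.val + 1, h⟩ / z t i)
      (nhdsWithin 0 (Set.Ioi (0 : ℝ))) atTop ∧
    Tendsto (fun t => z t ⟨i.val + 1, h⟩ - z t i) atTop atTop)

/-- The deformation of a collision path: for `1 ≤ i ≤ n−1`, `z_i(s,t) = z_i(st)` for
`t ≤ 1` and `z_i(t−1+s)` for `t > 1`; and `z_n(s,t) = ((2−t)/(1−t+s))·z_n(t)` for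
`t ≤ 1` and `s⁻¹ z_n(t)` for `t > 1`. -/
noncomputable def deform (n : ℕ) (z : ℝ → Fin n → ℝ) (s : ℝ) : ℝ → Fin n → ℝ :=
  fun t i =>
    if i.val + 1 = n then
      if t ≤ 1 then ((2 - t) / (1 - t + s)) * z t i else s⁻¹ * z t i
    else
      if t ≤ 1 then z (s * t) i else z (t - 1 + s) i

/-- Every coordinate of a collision path is in fact monotone (the antitone case is
ruled out by the limiting behaviour). -/
lemma mono_of_collision {n : ℕ} {z : ℝ → Fin n → ℝ} (hz : IsCollisionPath n z)
    (i : Fin n) : MonotoneOn (fun t => z t i) (Set.Ioi (0 : ℝ)) := by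
  rcases hz.2.1 i with h | h
  · exact h
  · exfalso
    obtain ⟨t, ht⟩ := (((hz.2.2.1 i).2.eventually_ge_atTop (z 1 i + 1)).and
      (eventually_ge_atTop (1 : ℝ))).exists
    have h1 : z t i ≤ z 1 i :=
      h (Set.mem_Ioi.mpr one_pos) (Set.mem_Ioi.mpr (by linarith [ht.2])) ht.2
    linarith [ht.1]

lemma nonneg_of_collision {n : ℕ} {z : ℝ → Fin n → ℝ} (hz : IsCollisionPath n z)
    (i : Fin n) {t : ℝ} (ht : 0 < t) : 0 ≤ z t i := by
  have hlim := (hz.2.2.1 i).1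
  have hev : ∀ᶠ u in nhdsWithin 0 (Set.Ioi (0 : ℝ)), z u i ≤ z t i := by
    filter_upwards [Ioo_mem_nhdsGT_of_mem (⟨le_refl 0, ht⟩ : (0:ℝ) ∈ Set.Ico 0 t)]
      with u hu
    exact mono_of_collision hz i (Set.mem_Ioi.mpr hu.1) (Set.mem_Ioi.mpr ht) hu.2.le
  exact le_of_tendsto hlim hev

lemma evpos_of_collision {n : ℕ} {z : ℝ → Fin n → ℝ} (hz : IsCollisionPath n z)
    (i : Fin n) (h : i.val + 1 < n) :
    ∀ᶠ u in nhdsWithin 0 (Set.Ioi (0 : ℝ)), 0 < z u i := by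
  filter_upwards [(hz.2.2.2 i h).1.eventually_ge_atTop 1, self_mem_nhdsWithin]
    with u h1 hu
  rcases (nonneg_of_collision hz i hu).lt_or_eq with h' | h'
  · exact h'
  · rw [← h', div_zero] at h1; linarith

lemma one_le_factor {s t : ℝ} (hs0 : 0 < s) (hs1 : s ≤ 1) (ht : t ≤ 1) :
    1 ≤ (2 - t) / (1 - t + s) := by
  rw [le_div_iff₀ (by linarith)]; linarith

lemma factor_le_inv {s t : ℝ} (hs0 : 0 < s) (hs1 : s ≤ 1) (ht : t ≤ 1) :
    (2 - t) / (1 - t + s) ≤ s⁻¹ := by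
  rw [inv_eq_one_div, div_le_div_iff₀ (by linarith) hs0]
  nlinarith [mul_nonneg (sub_nonneg.mpr hs1) (sub_nonneg.mpr ht)]

lemma factor_mono {s a b : ℝ} (hs0 : 0 < s) (hs1 : s ≤ 1) (hab : a ≤ b) (hb : b ≤ 1) :
    (2 - a) / (1 - a + s) ≤ (2 - b) / (1 - b + s) := by
  rw [div_le_div_iff₀ (by linarith) (by linarith)]
  nlinarith [mul_nonneg (sub_nonneg.mpr hab) (sub_nonneg.mpr hs1)]

/-- For a collision path `z` and fixed `s ∈ (0, 1]`, the deformed path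
`z(s, ·)` is again a collision path. -/
theorem deform_isCollisionPath (n : ℕ) (z : ℝ → Fin n → ℝ)
    (hz : IsCollisionPath n z) (s : ℝ) (hs0 : 0 < s) (hs1 : s ≤ 1) :
    IsCollisionPath n (deform n z s) := by
  have hord := hz.1
  have hlim := hz.2.2.1
  have hasym := hz.2.2.2
  have hmono : ∀ i, MonotoneOn (fun t => z t i) (Set.Ioi (0 : ℝ)) :=
    mono_of_collision hz
  have hnn : ∀ (i : Fin n) (t : ℝ), 0 < t → 0 ≤ z t i :=
    fun i t ht => nonneg_of_collision hz i ht
  have hinv1 : (1 : ℝ) ≤ s⁻¹ := by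
    rw [le_inv_comm₀ one_pos hs0]; simpa using hs1
  have hst : Tendsto (fun t : ℝ => s * t) (nhdsWithin 0 (Set.Ioi (0 : ℝ)))
      (nhdsWithin 0 (Set.Ioi (0 : ℝ))) := by
    rw [tendsto_nhdsWithin_iff]
    constructor
    · have h := (tendsto_const_nhds.mul tendsto_id :
        Tendsto (fun t : ℝ => s * t) (nhds 0) (nhds (s * 0)))
      rw [mul_zero] at h
      exact h.mono_left nhdsWithin_le_nhds
    · filter_upwards [self_mem_nhdsWithin] with t ht
      exact mul_pos hs0 ht
  have hshift : Tendsto (fun t : ℝ => t - 1 + s) atTop atTop := by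
    have h := tendsto_atTop_add_const_right atTop (s - 1) (tendsto_id (α := ℝ))
    exact h.congr (fun x => by simp only [id_eq]; ring)
  have hlt1 : ∀ᶠ t in nhdsWithin 0 (Set.Ioi (0 : ℝ)), t < 1 :=
    (gt_mem_nhds (show (0:ℝ) < 1 by norm_num)).filter_mono nhdsWithin_le_nhds
  refine ⟨?_, ?_, ?_, ?_⟩
  · -- ordered
    intro t ht i j hij
    have hine : ¬ (i.val + 1 = n) := by
      have h1 : i.val < j.val := hij
      have h2 := j.isLt
      omega
    by_cases hjn : j.val + 1 = n
    · simp only [deform, if_neg hine, if_pos hjn]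
      by_cases ht1 : t ≤ 1
      · simp only [if_pos ht1]
        have h1 : z (s * t) i ≤ z t i :=
          hmono i (Set.mem_Ioi.mpr (mul_pos hs0 ht)) (Set.mem_Ioi.mpr ht) (by nlinarith)
        have h2 : z t i < z t j := hord t ht i j hij
        have h3 : z t j ≤ (2 - t) / (1 - t + s) * z t j :=
          le_mul_of_one_le_left (hnn j t ht) (one_le_factor hs0 hs1 ht1)
        linarith
      · push_neg at ht1
        simp only [if_neg (not_le.mpr ht1)]
        have h1 : z (t - 1 + s) i ≤ z t i :=
          hmono i (Set.mem_Ioi.mpr (by linarith)) (Set.mem_Ioi.mpr (by linarith))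
            (by linarith)
        have h2 : z t i < z t j := hord t ht i j hij
        have h3 : z t j ≤ s⁻¹ * z t j := le_mul_of_one_le_left (hnn j t ht) hinv1
        linarith
    · simp only [deform, if_neg hine, if_neg hjn]
      by_cases ht1 : t ≤ 1
      · simp only [if_pos ht1]
        exact hord _ (mul_pos hs0 ht) i j hij
      · push_neg at ht1
        simp only [if_neg (not_le.mpr ht1)]
        exact hord _ (by linarith) i j hij
  · -- monotonicity
    intro i
    left
    intro a ha b hb hab
    rw [Set.mem_Ioi] at ha hb
    simp only [deform]
    by_cases hin : i.val + 1 = n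
    · simp only [if_pos hin]
      by_cases hb1 : b ≤ 1
      · have ha1 : a ≤ 1 := hab.trans hb1
        rw [if_pos ha1, if_pos hb1]
        exact mul_le_mul (factor_mono hs0 hs1 hab hb1)
          (hmono i (Set.mem_Ioi.mpr ha) (Set.mem_Ioi.mpr hb) hab) (hnn i a ha)
          (le_trans zero_le_one (one_le_factor hs0 hs1 hb1))
      · push_neg at hb1
        rw [if_neg (not_le.mpr hb1)]
        by_cases ha1 : a ≤ 1
        · rw [if_pos ha1]
          exact mul_le_mul (factor_le_inv hs0 hs1 ha1)
            (hmono i (Set.mem_Ioi.mpr ha) (Set.mem_Ioi.mpr hb) hab) (hnn i a ha)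
            (inv_nonneg.mpr hs0.le)
        · rw [if_neg ha1]
          exact mul_le_mul_of_nonneg_left
            (hmono i (Set.mem_Ioi.mpr ha) (Set.mem_Ioi.mpr hb) hab)
            (inv_nonneg.mpr hs0.le)
    · simp only [if_neg hin]
      by_cases ha1 : a ≤ 1
      · by_cases hb1 : b ≤ 1
        · rw [if_pos ha1, if_pos hb1]
          exact hmono i (Set.mem_Ioi.mpr (mul_pos hs0 ha))
            (Set.mem_Ioi.mpr (mul_pos hs0 hb)) (by nlinarith)
        · push_neg at hb1
          rw [if_pos ha1, if_neg (not_le.mpr hb1)]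
          exact hmono i (Set.mem_Ioi.mpr (mul_pos hs0 ha))
            (Set.mem_Ioi.mpr (by linarith)) (by nlinarith)
      · push_neg at ha1
        have hb1 : ¬ (b ≤ 1) := not_le.mpr (lt_of_lt_of_le ha1 hab)
        rw [if_neg (not_le.mpr ha1), if_neg hb1]
        exact hmono i (Set.mem_Ioi.mpr (by linarith)) (Set.mem_Ioi.mpr (by linarith))
          (by linarith)
  · -- limiting behaviour
    intro i
    constructor
    · by_cases hin : i.val + 1 = n
      · have hf : Tendsto (fun t : ℝ => (2 - t) / (1 - t + s)) (nhds 0)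
            (nhds ((2 - 0) / (1 - 0 + s))) := by
          exact (tendsto_const_nhds.sub tendsto_id).div
            ((tendsto_const_nhds.sub tendsto_id).add tendsto_const_nhds) (by norm_num; linarith)
        have h := ((hf.mono_left nhdsWithin_le_nhds).mul (hlim i).1)
        rw [mul_zero] at h
        refine h.congr' ?_
        filter_upwards [hlt1] with t ht
        simp only [deform, if_pos hin, if_pos ht.le]
      · refine ((hlim i).1.comp hst).congr' ?_
        filter_upwards [hlt1] with t ht
        simp only [deform, if_neg hin, if_pos ht.le, Function.comp]
    · by_cases hin : i.val + 1 = n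
      · have h : Tendsto (fun t => s⁻¹ * z t i) atTop atTop :=
          (hlim i).2.const_mul_atTop (inv_pos.mpr hs0)
        refine h.congr' ?_
        filter_upwards [eventually_gt_atTop (1:ℝ)] with t ht
        simp only [deform, if_pos hin, if_neg (not_le.mpr ht)]
      · refine ((hlim i).2.comp hshift).congr' ?_
        filter_upwards [eventually_gt_atTop (1:ℝ)] with t ht
        simp only [deform, if_neg hin, if_neg (not_le.mpr ht), Function.comp]
  · -- asymptotic ordering
    intro i hn1
    have hine : ¬ (i.val + 1 = n) := by omega
    constructor
    · by_cases hin2 : i.val + 1 + 1 = n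
      · -- successor is the last particle
        have hcomp : Tendsto (fun t => z (s * t) ⟨i.val + 1, hn1⟩ / z (s * t) i)
            (nhdsWithin 0 (Set.Ioi (0:ℝ))) atTop := (hasym i hn1).1.comp hst
        refine tendsto_atTop_mono' _ ?_ hcomp
        filter_upwards [hst.eventually (evpos_of_collision hz i hn1), hlt1,
          self_mem_nhdsWithin] with t hpos ht1 ht0
        have hd1 : deform n z s t ⟨i.val + 1, hn1⟩ =
            (2 - t) / (1 - t + s) * z t ⟨i.val + 1, hn1⟩ := by
          simp only [deform, hin2, if_pos ht1.le, if_true]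
        have hd2 : deform n z s t i = z (s * t) i := by
          simp only [deform, if_neg hine, if_pos ht1.le]
        rw [hd1, hd2]
        have hnum : z (s * t) ⟨i.val + 1, hn1⟩ ≤
            (2 - t) / (1 - t + s) * z t ⟨i.val + 1, hn1⟩ := by
          have h1 : z (s * t) ⟨i.val + 1, hn1⟩ ≤ z t ⟨i.val + 1, hn1⟩ :=
            hmono _ (Set.mem_Ioi.mpr (mul_pos hs0 ht0)) ht0
              (by have := Set.mem_Ioi.mp ht0; nlinarith)
          have h2 : z t ⟨i.val + 1, hn1⟩ ≤ (2 - t) / (1 - t + s) * z t ⟨i.val + 1, hn1⟩ :=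
            le_mul_of_one_le_left (hnn _ t (Set.mem_Ioi.mp ht0)) (one_le_factor hs0 hs1 ht1.le)
          linarith
        gcongr
      · refine ((hasym i hn1).1.comp hst).congr' ?_
        filter_upwards [hlt1] with t ht
        simp only [deform, hin2, if_neg hine, if_pos ht.le, Function.comp, if_false]
    · by_cases hin2 : i.val + 1 + 1 = n
      · refine tendsto_atTop_mono' _ ?_ (hasym i hn1).2
        filter_upwards [eventually_gt_atTop (1:ℝ)] with t ht
        have hd1 : deform n z s t ⟨i.val + 1, hn1⟩ = s⁻¹ * z t ⟨i.val + 1, hn1⟩ := by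
          simp only [deform, hin2, if_neg (not_le.mpr ht), if_true]
        have hd2 : deform n z s t i = z (t - 1 + s) i := by
          simp only [deform, if_neg hine, if_neg (not_le.mpr ht)]
        rw [hd1, hd2]
        have h1 : z t ⟨i.val + 1, hn1⟩ ≤ s⁻¹ * z t ⟨i.val + 1, hn1⟩ :=
          le_mul_of_one_le_left (hnn _ t (by linarith)) hinv1
        have h2 : z (t - 1 + s) i ≤ z t i :=
          hmono i (Set.mem_Ioi.mpr (by linarith)) (Set.mem_Ioi.mpr (by linarith))
            (by linarith)
        linarith
      · refine ((hasym i hn1).2.comp hshift).congr' ?_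
        filter_upwards [eventually_gt_atTop (1:ℝ)] with t ht
        simp only [deform, hin2, if_neg hine, if_neg (not_le.mpr ht), Function.comp,
          if_false]

end GaudinPaper
end
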